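/- arXiv:2506.18356 — 9 statements merged into one kernel-verified Lean document; each statement's English description precedes it below -/
import Mathlib

section
/- Let M and M̃ be n×n nonsingular M-matrices (off-diagonal entries nonpositive, inverses entrywise nonnegative) with M𝟏 ≥ 0 and M̃𝟏 ≥ 0 entrywise, where 𝟏 is the all-ones vector. Let 0 ≤ ε < 1 be such that for all i ≠ j, (1−ε)(−M_{ij}) ≤ −M̃_{ij} ≤ (1+ε)(−M_{ij}), and for all i, (1−ε)(M𝟏)_i ≤ (M̃𝟏)_i ≤ (1+ε)(M𝟏)_i. Then, entrywise, ((1−ε)^{n−1}/(1+ε)^n)·M⁻¹ ≤ M̃⁻¹ ≤ ((1+ε)^{n−1}/(1−ε)^n)·M⁻¹. -/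
open Matrix Finset

def ElemRow {ι : Type} [DecidableEq ι] (i : ι) (v : ι → ℝ) : Prop :=
  v = Pi.single i 1 ∨ ∃ k, k ≠ i ∧ v = Pi.single i 1 - Pi.single k 1

lemma det_delete {ι : Type} [Fintype ι] [DecidableEq ι] (A : Matrix ι ι ℝ) (i : ι)
    (h : A i = Pi.single i 1) :
    A.det = (A.submatrix (Subtype.val : {x // ¬ x = i} → ι) Subtype.val).det := by
  classical
  haveI : Unique {x // x = i} := ⟨⟨⟨i, rfl⟩⟩, fun ⟨x, hx⟩ => Subtype.ext hx⟩
  rw [← Matrix.det_submatrix_equiv_self (Equiv.sumCompl (· = i))]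
  have hB : A.submatrix (Equiv.sumCompl (· = i)) (Equiv.sumCompl (· = i)) =
      Matrix.fromBlocks (Matrix.of fun _ _ => A i i) 0
        (Matrix.of fun x y => A x.val i) (A.submatrix Subtype.val Subtype.val) := by
    ext x y
    rcases x with ⟨x, rfl⟩ | x <;> rcases y with ⟨y, rfl⟩ | y <;>
      simp [Matrix.fromBlocks]
    have := congrFun h y.val
    simp [Pi.single_apply, y.prop] at this
    exact this
  rw [hB, Matrix.det_fromBlocks_zero₁₂]
  have h11 : (Matrix.of fun (_ : {x // x = i}) (_ : {x // x = i}) => A i i).det = A i i :=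
    Matrix.det_unique _
  have hii : A i i = 1 := by
    have := congrFun h i; simpa using this
  rw [h11, hii, one_mul]

/-- Restriction of an elementary row to the complement of a deleted index. -/
lemma elem_restrict {ι : Type} [Fintype ι] [DecidableEq ι] (A : Matrix ι ι ℝ) (i : ι)
    (x : {y // ¬ y = i}) (hx : ElemRow x.val (A x.val)) :
    ElemRow x ((A.submatrix (Subtype.val : {y // ¬ y = i} → ι) Subtype.val) x) := by
  classical
  rcases hx with h | ⟨k, hki, h⟩
  · left
    funext y
    have := congrFun h y.val
    simp only [Matrix.submatrix_apply, this, Pi.single_apply, Subtype.ext_iff]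
  · by_cases hk : k = i
    · subst hk
      left
      funext y
      have := congrFun h y.val
      simp only [Matrix.submatrix_apply, this, Pi.sub_apply, Pi.single_apply,
        Subtype.ext_iff]
      simp [y.prop]
    · right
      refine ⟨⟨k, hk⟩, fun hc => hki (congrArg Subtype.val hc), ?_⟩
      funext y
      have := congrFun h y.val
      simp only [Matrix.submatrix_apply, this, Pi.sub_apply, Pi.single_apply,
        Subtype.ext_iff]

lemma card_compl_le {ι : Type} [Fintype ι] [DecidableEq ι] (i : ι) {N : ℕ}
    (h : Fintype.card ι ≤ N + 1) : Fintype.card {x // ¬ x = i} ≤ N := by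
  have h1 : Fintype.card {x // ¬ x = i} = Fintype.card ι - Fintype.card {x // x = i} :=
    Fintype.card_subtype_compl _
  have h2 : Fintype.card {x // x = i} = 1 := Fintype.card_subtype_eq i
  omega

lemma base_det_nonneg : ∀ (N : ℕ) (ι : Type) [Fintype ι] [DecidableEq ι],
    Fintype.card ι ≤ N → ∀ (A : Matrix ι ι ℝ) (j₀ : ι),
    (∀ i, ¬ i = j₀ → ElemRow i (A i)) →
    (A j₀ = 0 ∨ (∃ k, A j₀ = Pi.single k 1) ∨ ElemRow j₀ (A j₀)) →
    0 ≤ A.det := by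
  intro N
  induction N with
  | zero =>
    intro ι _ _ hcard A j₀ _ _
    have : 0 < Fintype.card ι := Fintype.card_pos_iff.mpr ⟨j₀⟩
    omega
  | succ N IH =>
    intro ι _ _ hcard A j₀ hElem hspec
    classical
    -- Case (a): delete row j₀ itself when it equals `e_{j₀}`
    have hdelA : A j₀ = Pi.single j₀ 1 → 0 ≤ A.det := by
      intro hj
      rw [det_delete A j₀ hj]
      by_cases hne : Nonempty {y // ¬ y = j₀}
      · obtain ⟨j₁⟩ := hne
        refine IH _ (card_compl_le j₀ hcard) _ j₁ ?_ ?_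
        · intro x _
          exact elem_restrict A j₀ x (hElem x.val x.prop)
        · right; right
          exact elem_restrict A j₀ j₁ (hElem j₁.val j₁.prop)
      · haveI : IsEmpty {y // ¬ y = j₀} := not_nonempty_iff.mp hne
        rw [Matrix.det_isEmpty]
        exact zero_le_one
    -- Case (b): delete another row i ≠ j₀ equal to `e_i`, provided row j₀ is Elem
    have hdelB : ∀ i, ¬ i = j₀ → A i = Pi.single i 1 → ElemRow j₀ (A j₀) → 0 ≤ A.det := by
      intro i hij hi hEj
      rw [det_delete A i hi]
      have hj₀i : ¬ (j₀ : ι) = i := fun hc => hij hc.symm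
      refine IH _ (card_compl_le i hcard) _ ⟨j₀, hj₀i⟩ ?_ ?_
      · intro x hx
        refine elem_restrict A i x (hElem x.val ?_)
        exact fun hc => hx (Subtype.ext hc)
      · right; right
        exact elem_restrict A i ⟨j₀, hj₀i⟩ hEj
    -- Case (c): contraction when row j₀ = e_{k₀}, k₀ ≠ j₀
    have hcontract : ∀ k₀, ¬ k₀ = j₀ → A j₀ = Pi.single k₀ 1 → 0 ≤ A.det := by
      intro k₀ hk₀j hj
      set s : Equiv.Perm ι := Equiv.swap j₀ k₀ with hs
      set A₁ : Matrix ι ι ℝ := A.submatrix id s with hA₁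
      have hdet₁ : A₁.det = -A.det := by
        rw [hA₁, Matrix.det_permute' s A, hs, Equiv.Perm.sign_swap (fun hc => hk₀j hc.symm)]
        simp
      have hcond : ∀ y : ι, (s y = k₀) ↔ (y = j₀) := by
        intro y
        constructor
        · intro h; exact s.injective (h.trans (Equiv.swap_apply_left j₀ k₀).symm)
        · intro h; rw [h]; exact Equiv.swap_apply_left j₀ k₀
      have hcond2 : ∀ (m y : ι), (s y = m) ↔ (y = s m) := by
        intro m y
        rw [← Equiv.symm_apply_eq]
        simp [hs]
      have hrow₁ : A₁ j₀ = Pi.single j₀ 1 := by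
        funext y
        have h1 := congrFun hj (s y)
        simp only [hA₁, Matrix.submatrix_apply, id_eq]
        rw [h1]
        simp only [Pi.single_apply, hcond y]
      have hdel := det_delete A₁ j₀ hrow₁
      set D := A₁.submatrix (Subtype.val : {x // ¬ x = j₀} → ι) Subtype.val with hD
      have hAD : A.det = -D.det := by rw [← hdel]; linarith [hdet₁]
      have hk₀j' : ¬ (k₀ : ι) = j₀ := hk₀j
      set i₀ : {x // ¬ x = j₀} := ⟨k₀, hk₀j'⟩ with hi₀
      rcases hElem k₀ hk₀j with hk | ⟨m, hmk, hk⟩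
      · have hz : ∀ y : {x // ¬ x = j₀}, D i₀ y = 0 := by
          intro y
          have h1 := congrFun hk (s y.val)
          simp only [hD, hA₁, Matrix.submatrix_apply, id_eq, hi₀]
          rw [h1]
          simp [Pi.single_apply, hcond y.val, y.prop]
        rw [hAD, Matrix.det_eq_zero_of_row_eq_zero i₀ hz]
        simp
      · have hgj : ¬ (s m : ι) = j₀ := by
          intro hc
          apply hmk
          have h2 : (m : ι) = s j₀ := by rw [← hc]; simp [hs]
          simpa [hs, Equiv.swap_apply_left] using h2
        set g : {x // ¬ x = j₀} := ⟨s m, hgj⟩ with hg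
        have hrowD : D i₀ = -Pi.single g (1:ℝ) := by
          funext y
          have h1 := congrFun hk (s y.val)
          simp only [hD, hA₁, Matrix.submatrix_apply, id_eq, hi₀]
          rw [h1]
          simp only [Pi.sub_apply, Pi.neg_apply, Pi.single_apply]
          rw [if_neg (fun hc => y.prop ((hcond y.val).mp hc))]
          have h3 : ((s y.val : ι) = m) ↔ (y = g) := by
            rw [hcond2 m y.val]
            exact ⟨fun h => Subtype.ext h, fun h => congrArg Subtype.val h⟩
          simp only [h3]
          simp
        set E := D.updateRow i₀ (Pi.single g 1) with hE
        have hDE : D.det = -E.det := by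
          conv_lhs => rw [← Matrix.updateRow_eq_self D i₀]
          rw [hrowD, show (-(Pi.single g 1 : {x // ¬ x = j₀} → ℝ))
              = (-1 : ℝ) • (Pi.single g 1 : {x // ¬ x = j₀} → ℝ) by simp,
            Matrix.det_updateRow_smul]
          simp [hE]
        rw [hAD, hDE, neg_neg]
        refine IH _ (card_compl_le j₀ hcard) _ i₀ ?_ ?_
        · intro x hx
          have hxj : ¬ (x : ι) = j₀ := x.prop
          have hxk : ¬ (x : ι) = k₀ := fun hc => hx (Subtype.ext hc)
          have hsx : s x.val = x.val := Equiv.swap_apply_of_ne_of_ne hxj hxk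
          have hErow : E x = D x := Matrix.updateRow_ne hx
          have hc : ∀ y : {x // ¬ x = j₀}, ((s y.val : ι) = x.val) ↔ (y = x) := by
            intro y
            rw [hcond2 x.val y.val, hsx]
            exact ⟨fun h => Subtype.ext h, fun h => congrArg Subtype.val h⟩
          rcases hElem x.val hxj with hxr | ⟨m', hm'x, hxr⟩
          · left
            funext y
            have h1 := congrFun hxr (s y.val)
            rw [hErow]
            simp only [hD, hA₁, Matrix.submatrix_apply, id_eq]
            rw [h1]
            simp only [Pi.single_apply, hc y, Subtype.ext_iff]
          · by_cases hm'k : m' = k₀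
            · left
              funext y
              have h1 := congrFun hxr (s y.val)
              rw [hErow]
              simp only [hD, hA₁, Matrix.submatrix_apply, id_eq]
              rw [h1]
              have hc2 : ¬ ((s y.val : ι) = m') := by
                rw [hm'k]; exact fun hcc => y.prop ((hcond y.val).mp hcc)
              simp only [Pi.sub_apply, Pi.single_apply, hc y, if_neg hc2, Subtype.ext_iff]
              simp
            · right
              have hgx : ¬ (s m' : ι) = j₀ := by
                intro hcc
                apply hm'k
                have h2 : (m' : ι) = s j₀ := by rw [← hcc]; simp [hs]
                simpa [hs, Equiv.swap_apply_left] using h2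
              refine ⟨⟨s m', hgx⟩, ?_, ?_⟩
              · intro hcc
                apply hm'x
                have h2 : (s m' : ι) = x.val := congrArg Subtype.val hcc
                rw [← hsx] at h2
                exact s.injective h2
              · funext y
                have h1 := congrFun hxr (s y.val)
                rw [hErow]
                simp only [hD, hA₁, Matrix.submatrix_apply, id_eq]
                rw [h1]
                have hc2 : ((s y.val : ι) = m') ↔ (y = ⟨s m', hgx⟩) := by
                  rw [hcond2 m' y.val]
                  exact ⟨fun h => Subtype.ext h, fun h => congrArg Subtype.val h⟩
                simp only [Pi.sub_apply, Pi.single_apply, hc y, hc2, Subtype.ext_iff]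
        · right; left
          exact ⟨g, Matrix.updateRow_self⟩
    -- main case split
    rcases hspec with h0 | ⟨k₀, hk₀⟩ | hEj
    · rw [Matrix.det_eq_zero_of_row_eq_zero j₀ (fun j => congrFun h0 j)]
    · by_cases hkj : k₀ = j₀
      · exact hdelA (hkj ▸ hk₀)
      · exact hcontract k₀ hkj hk₀
    · rcases hEj with hj | ⟨k, hkj, hj⟩
      · exact hdelA hj
      · by_cases hex : ∃ i, ¬ i = j₀ ∧ A i = Pi.single i 1
        · obtain ⟨i, hij, hi⟩ := hex
          exact hdelB i hij hi (Or.inr ⟨k, hkj, hj⟩)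
        · push_neg at hex
          have hvec : A *ᵥ (fun _ => (1:ℝ)) = 0 := by
            funext x
            have hxrow : ∃ k', k' ≠ x ∧ A x = Pi.single x 1 - Pi.single k' 1 := by
              by_cases hx : x = j₀
              · subst hx; exact ⟨k, hkj, hj⟩
              · rcases hElem x hx with h | h
                · exact absurd h (hex x hx)
                · exact h
            obtain ⟨k', _, hk'⟩ := hxrow
            simp only [Matrix.mulVec, dotProduct, mul_one, Pi.zero_apply]
            rw [hk']
            simp [Finset.sum_sub_distrib, Pi.single_apply]
          have hdet0 : A.det = 0 := by
            refine Matrix.exists_mulVec_eq_zero_iff.mp ⟨(fun _ => (1:ℝ)), ?_, hvec⟩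
            intro hc
            have := congrFun hc j₀
            norm_num at this
          rw [hdet0]

lemma det_updateRow_finset_sum {ι : Type} [Fintype ι] [DecidableEq ι]
    (M : Matrix ι ι ℝ) (i : ι) (s : Finset ι) (f : ι → (ι → ℝ)) :
    (M.updateRow i (∑ k ∈ s, f k)).det = ∑ k ∈ s, (M.updateRow i (f k)).det := by
  classical
  induction s using Finset.induction_on with
  | empty =>
    simp only [Finset.sum_empty]
    exact Matrix.det_eq_zero_of_row_eq_zero i (fun j => by simp)
  | @insert k s hk ih =>
    rw [Finset.sum_insert hk, Matrix.det_updateRow_add, ih, Finset.sum_insert hk]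

lemma det_row_expand {ι : Type} [Fintype ι] [DecidableEq ι] (M : Matrix ι ι ℝ) (i : ι) :
    M.det = (∑ k ∈ Finset.univ.erase i,
        (-(M i k)) * (M.updateRow i (Pi.single i 1 - Pi.single k 1)).det)
      + (∑ k, M i k) * (M.updateRow i (Pi.single i 1)).det := by
  classical
  have hrow : M i = (∑ k ∈ Finset.univ.erase i,
      (-(M i k)) • (Pi.single i 1 - Pi.single k 1 : ι → ℝ))
      + (∑ k, M i k) • (Pi.single i 1 : ι → ℝ) := by
    funext c
    simp only [Pi.add_apply, Finset.sum_apply, Pi.smul_apply, Pi.sub_apply, Pi.single_apply,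
      smul_eq_mul]
    by_cases hc : c = i
    · subst hc
      have h1 : ∀ k ∈ Finset.univ.erase c,
          -(M c k) * ((if c = c then (1:ℝ) else 0) - if c = k then 1 else 0) = -(M c k) := by
        intro k hk
        rw [if_pos rfl, if_neg (fun h => (Finset.mem_erase.mp hk).1 h.symm)]
        ring
      rw [Finset.sum_congr rfl h1, if_pos rfl, mul_one]
      have h2 := Finset.sum_erase_add Finset.univ (fun k => M c k) (Finset.mem_univ c)
      have h3 : ∑ k ∈ Finset.univ.erase c, -(M c k) = -∑ k ∈ Finset.univ.erase c, M c k := by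
        rw [Finset.sum_neg_distrib]
      rw [h3]
      linarith [h2]
    · have h1 : ∀ k ∈ Finset.univ.erase i,
          -(M i k) * ((if c = i then (1:ℝ) else 0) - if c = k then 1 else 0)
          = (if c = k then M i k else 0) := by
        intro k hk
        rw [if_neg hc]
        by_cases h : c = k <;> simp [h]
      rw [Finset.sum_congr rfl h1, if_neg hc, mul_zero, add_zero,
        Finset.sum_ite_eq (Finset.univ.erase i) c (fun k => M i k),
        if_pos (Finset.mem_erase.mpr ⟨hc, Finset.mem_univ c⟩)]
  conv_lhs => rw [← Matrix.updateRow_eq_self M i, hrow]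
  rw [Matrix.det_updateRow_add, Matrix.det_updateRow_smul, det_updateRow_finset_sum]
  congr 1
  refine Finset.sum_congr rfl fun k hk => ?_
  rw [Matrix.det_updateRow_smul]

lemma key_det_bound {n : ℕ} (ε : ℝ) (hε0 : 0 ≤ ε) (hε1 : ε < 1) :
    ∀ (S : Finset (Fin n)) (A B : Matrix (Fin n) (Fin n) ℝ) (j₀ : Fin n),
    (∀ i, i ∉ S → B i = A i) →
    (∀ i, i ∉ S → ¬ i = j₀ → ElemRow i (A i)) →
    (j₀ ∉ S → (A j₀ = 0 ∨ (∃ k, A j₀ = Pi.single k 1) ∨ ElemRow j₀ (A j₀))) →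
    (∀ i ∈ S, ∀ k, k ≠ i → A i k ≤ 0) →
    (∀ i ∈ S, 0 ≤ ∑ k, A i k) →
    (∀ i ∈ S, ∀ k, k ≠ i → (1-ε) * (-(A i k)) ≤ -(B i k) ∧ -(B i k) ≤ (1+ε) * (-(A i k))) →
    (∀ i ∈ S, (1-ε) * (∑ k, A i k) ≤ ∑ k, B i k ∧ ∑ k, B i k ≤ (1+ε) * (∑ k, A i k)) →
    0 ≤ A.det ∧ (1-ε)^S.card * A.det ≤ B.det ∧ B.det ≤ (1+ε)^S.card * A.det := by
  have h1ε : (0:ℝ) < 1 - ε := by linarith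
  have h2ε : (0:ℝ) < 1 + ε := by linarith
  intro S
  induction S using Finset.strongInduction with
  | _ S IH =>
    intro A B j₀ hBA hElem hspec hAoff hArow hoff hrow
    rcases Finset.eq_empty_or_nonempty S with rfl | ⟨i, hi⟩
    · have hAB : B = A := by
        ext x k
        exact congrFun (hBA x (Finset.notMem_empty x)) k
      have h0 : 0 ≤ A.det :=
        base_det_nonneg (Fintype.card (Fin n)) (Fin n) le_rfl A j₀
          (fun i hij => hElem i (Finset.notMem_empty i) hij)
          (hspec (Finset.notMem_empty j₀))
      refine ⟨h0, ?_, ?_⟩ <;> simp [hAB]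
    · set S' := S.erase i with hS'
      have hSS' : S' ⊂ S := Finset.erase_ssubset hi
      have hcard : S.card = S'.card + 1 := by
        rw [hS', Finset.card_erase_of_mem hi]
        have : 0 < S.card := Finset.card_pos.mpr ⟨i, hi⟩
        omega
      -- inductive hypothesis applied to row-i-replaced matrices
      have IHv : ∀ v : Fin n → ℝ, ElemRow i v →
          0 ≤ (A.updateRow i v).det ∧
          (1-ε)^S'.card * (A.updateRow i v).det ≤ (B.updateRow i v).det ∧
          (B.updateRow i v).det ≤ (1+ε)^S'.card * (A.updateRow i v).det := by
        intro v hv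
        refine IH S' hSS' (A.updateRow i v) (B.updateRow i v) j₀ ?_ ?_ ?_ ?_ ?_ ?_ ?_
        · intro x hx
          by_cases hxi : x = i
          · subst hxi; rw [Matrix.updateRow_self, Matrix.updateRow_self]
          · have hxS : x ∉ S := fun hc => hx (Finset.mem_erase.mpr ⟨hxi, hc⟩)
            rw [Matrix.updateRow_ne hxi, Matrix.updateRow_ne hxi]
            exact hBA x hxS
        · intro x hx hxj
          by_cases hxi : x = i
          · subst hxi; rw [Matrix.updateRow_self]; exact hv
          · have hxS : x ∉ S := fun hc => hx (Finset.mem_erase.mpr ⟨hxi, hc⟩)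
            rw [Matrix.updateRow_ne hxi]
            exact hElem x hxS hxj
        · intro hj
          by_cases hji : j₀ = i
          · subst hji; rw [Matrix.updateRow_self]
            exact Or.inr (Or.inr hv)
          · have hjS : j₀ ∉ S := fun hc => hj (Finset.mem_erase.mpr ⟨hji, hc⟩)
            rw [Matrix.updateRow_ne hji]
            exact hspec hjS
        · intro x hx k hk
          have hxi : x ≠ i := (Finset.mem_erase.mp hx).1
          rw [Matrix.updateRow_ne hxi]
          exact hAoff x (Finset.mem_of_mem_erase hx) k hk
        · intro x hx
          have hxi : x ≠ i := (Finset.mem_erase.mp hx).1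
          rw [show (A.updateRow i v) x = A x from Matrix.updateRow_ne hxi]
          exact hArow x (Finset.mem_of_mem_erase hx)
        · intro x hx k hk
          have hxi : x ≠ i := (Finset.mem_erase.mp hx).1
          rw [show (A.updateRow i v) x = A x from Matrix.updateRow_ne hxi,
            show (B.updateRow i v) x = B x from Matrix.updateRow_ne hxi]
          exact hoff x (Finset.mem_of_mem_erase hx) k hk
        · intro x hx
          have hxi : x ≠ i := (Finset.mem_erase.mp hx).1
          rw [show (A.updateRow i v) x = A x from Matrix.updateRow_ne hxi,
            show (B.updateRow i v) x = B x from Matrix.updateRow_ne hxi]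
          exact hrow x (Finset.mem_of_mem_erase hx)
      have eA := det_row_expand A i
      have eB := det_row_expand B i
      set c := S'.card with hc
      -- abbreviations
      have hterm : ∀ k ∈ Finset.univ.erase i,
          0 ≤ (-(A i k)) * (A.updateRow i (Pi.single i 1 - Pi.single k 1)).det ∧
          (1-ε)^(c+1) * ((-(A i k)) * (A.updateRow i (Pi.single i 1 - Pi.single k 1)).det)
            ≤ (-(B i k)) * (B.updateRow i (Pi.single i 1 - Pi.single k 1)).det ∧
          (-(B i k)) * (B.updateRow i (Pi.single i 1 - Pi.single k 1)).det
            ≤ (1+ε)^(c+1) * ((-(A i k)) * (A.updateRow i (Pi.single i 1 - Pi.single k 1)).det) := by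
        intro k hk
        have hki : k ≠ i := (Finset.mem_erase.mp hk).1
        obtain ⟨hd0, hdl, hdu⟩ := IHv _ (Or.inr ⟨k, hki, rfl⟩)
        have ha0 : 0 ≤ -(A i k) := by have := hAoff i hi k hki; linarith
        obtain ⟨hbl, hbu⟩ := hoff i hi k hki
        have hb0 : 0 ≤ -(B i k) := le_trans (by positivity) hbl
        refine ⟨mul_nonneg ha0 hd0, ?_, ?_⟩
        · calc (1-ε)^(c+1) * ((-(A i k)) * (A.updateRow i (Pi.single i 1 - Pi.single k 1)).det)
              = ((1-ε) * (-(A i k))) * ((1-ε)^c * (A.updateRow i (Pi.single i 1 - Pi.single k 1)).det) := by ring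
            _ ≤ (-(B i k)) * (B.updateRow i (Pi.single i 1 - Pi.single k 1)).det :=
              mul_le_mul hbl hdl (by positivity) hb0
        · calc (-(B i k)) * (B.updateRow i (Pi.single i 1 - Pi.single k 1)).det
              ≤ ((1+ε) * (-(A i k))) * ((1+ε)^c * (A.updateRow i (Pi.single i 1 - Pi.single k 1)).det) :=
              mul_le_mul hbu hdu (le_trans (by positivity) hdl) (by positivity)
            _ = (1+ε)^(c+1) * ((-(A i k)) * (A.updateRow i (Pi.single i 1 - Pi.single k 1)).det) := by ring
      have hterm0 :
          0 ≤ (∑ k, A i k) * (A.updateRow i (Pi.single i 1)).det ∧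
          (1-ε)^(c+1) * ((∑ k, A i k) * (A.updateRow i (Pi.single i 1)).det)
            ≤ (∑ k, B i k) * (B.updateRow i (Pi.single i 1)).det ∧
          (∑ k, B i k) * (B.updateRow i (Pi.single i 1)).det
            ≤ (1+ε)^(c+1) * ((∑ k, A i k) * (A.updateRow i (Pi.single i 1)).det) := by
        obtain ⟨hd0, hdl, hdu⟩ := IHv _ (Or.inl rfl)
        have ha0 : 0 ≤ ∑ k, A i k := hArow i hi
        obtain ⟨hbl, hbu⟩ := hrow i hi
        have hb0 : 0 ≤ ∑ k, B i k := le_trans (by positivity) hbl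
        refine ⟨mul_nonneg ha0 hd0, ?_, ?_⟩
        · calc (1-ε)^(c+1) * ((∑ k, A i k) * (A.updateRow i (Pi.single i 1)).det)
              = ((1-ε) * (∑ k, A i k)) * ((1-ε)^c * (A.updateRow i (Pi.single i 1)).det) := by ring
            _ ≤ (∑ k, B i k) * (B.updateRow i (Pi.single i 1)).det :=
              mul_le_mul hbl hdl (by positivity) hb0
        · calc (∑ k, B i k) * (B.updateRow i (Pi.single i 1)).det
              ≤ ((1+ε) * (∑ k, A i k)) * ((1+ε)^c * (A.updateRow i (Pi.single i 1)).det) :=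
              mul_le_mul hbu hdu (le_trans (by positivity) hdl) (by positivity)
            _ = (1+ε)^(c+1) * ((∑ k, A i k) * (A.updateRow i (Pi.single i 1)).det) := by ring
      refine ⟨?_, ?_, ?_⟩
      · rw [eA]
        have := Finset.sum_nonneg (fun k hk => (hterm k hk).1)
        linarith [hterm0.1]
      · rw [eA, eB, hcard, mul_add, Finset.mul_sum]
        exact add_le_add (Finset.sum_le_sum (fun k hk => (hterm k hk).2.1)) hterm0.2.1
      · rw [eA, eB, hcard, mul_add, Finset.mul_sum]
        exact add_le_add (Finset.sum_le_sum (fun k hk => (hterm k hk).2.2)) hterm0.2.2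

/-- Componentwise perturbation bound for inverses of nonsingular M-matrices
(Theorem `MMt` in the paper, due to O'Cinneide / Alfa–Xue–Ye). -/
theorem mmatrix_inverse_componentwise_bound
    {n : ℕ} (M Mt : Matrix (Fin n) (Fin n) ℝ) (ε : ℝ)
    (hMoff : ∀ i j, i ≠ j → M i j ≤ 0)
    (hMtoff : ∀ i j, i ≠ j → Mt i j ≤ 0)
    (hMdet : IsUnit M.det) (hMtdet : IsUnit Mt.det)
    (hMinv : ∀ i j, 0 ≤ M⁻¹ i j) (hMtinv : ∀ i j, 0 ≤ Mt⁻¹ i j)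
    (hMrow : ∀ i, 0 ≤ ∑ j, M i j) (hMtrow : ∀ i, 0 ≤ ∑ j, Mt i j)
    (hε0 : 0 ≤ ε) (hε1 : ε < 1)
    (hoff : ∀ i j, i ≠ j →
      (1 - ε) * (-(M i j)) ≤ -(Mt i j) ∧ -(Mt i j) ≤ (1 + ε) * (-(M i j)))
    (hrow : ∀ i, (1 - ε) * (∑ j, M i j) ≤ (∑ j, Mt i j) ∧
      (∑ j, Mt i j) ≤ (1 + ε) * (∑ j, M i j)) :
    ∀ i j, ((1 - ε) ^ (n - 1) / (1 + ε) ^ n) * M⁻¹ i j ≤ Mt⁻¹ i j ∧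
      Mt⁻¹ i j ≤ ((1 + ε) ^ (n - 1) / (1 - ε) ^ n) * M⁻¹ i j := by
  intro i j
  have h1ε : (0:ℝ) < 1 - ε := by linarith
  have h2ε : (0:ℝ) < 1 + ε := by linarith
  have hn : 0 < n := i.pos
  -- determinant bounds
  have hdet := key_det_bound ε hε0 hε1 Finset.univ M Mt i
    (fun x hx => absurd (Finset.mem_univ x) hx)
    (fun x hx => absurd (Finset.mem_univ x) hx)
    (fun h => absurd (Finset.mem_univ i) h)
    (fun x _ k hk => hMoff x k (Ne.symm hk))
    (fun x _ => hMrow x)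
    (fun x _ k hk => hoff x k (Ne.symm hk))
    (fun x _ => hrow x)
  rw [Finset.card_univ, Fintype.card_fin] at hdet
  obtain ⟨hdM0, hdMl, hdMu⟩ := hdet
  have hdM : 0 < M.det := lt_of_le_of_ne hdM0 (Ne.symm hMdet.ne_zero)
  have hdMt : 0 < Mt.det := lt_of_le_of_ne
    (le_trans (by positivity) hdMl) (Ne.symm hMtdet.ne_zero)
  -- adjugate bounds
  have hadj := key_det_bound ε hε0 hε1 (Finset.univ.erase j)
    (M.updateRow j (Pi.single i 1)) (Mt.updateRow j (Pi.single i 1)) j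
    (by
      intro x hx
      have hxj : x = j := by
        by_contra hc
        exact hx (Finset.mem_erase.mpr ⟨hc, Finset.mem_univ x⟩)
      subst hxj
      rw [Matrix.updateRow_self, Matrix.updateRow_self])
    (by
      intro x hx hxj
      exact absurd (Finset.mem_erase.mpr ⟨hxj, Finset.mem_univ x⟩) hx)
    (fun _ => Or.inr (Or.inl ⟨i, Matrix.updateRow_self⟩))
    (by
      intro x hx k hk
      have hxj : x ≠ j := (Finset.mem_erase.mp hx).1
      rw [Matrix.updateRow_ne hxj]
      exact hMoff x k (Ne.symm hk))
    (by
      intro x hx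
      have hxj : x ≠ j := (Finset.mem_erase.mp hx).1
      rw [show (M.updateRow j (Pi.single i 1)) x = M x from Matrix.updateRow_ne hxj]
      exact hMrow x)
    (by
      intro x hx k hk
      have hxj : x ≠ j := (Finset.mem_erase.mp hx).1
      rw [show (M.updateRow j (Pi.single i 1)) x = M x from Matrix.updateRow_ne hxj,
        show (Mt.updateRow j (Pi.single i 1)) x = Mt x from Matrix.updateRow_ne hxj]
      exact hoff x k (Ne.symm hk))
    (by
      intro x hx
      have hxj : x ≠ j := (Finset.mem_erase.mp hx).1
      rw [show (M.updateRow j (Pi.single i 1)) x = M x from Matrix.updateRow_ne hxj,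
        show (Mt.updateRow j (Pi.single i 1)) x = Mt x from Matrix.updateRow_ne hxj]
      exact hrow x)
  rw [Finset.card_erase_of_mem (Finset.mem_univ j), Finset.card_univ, Fintype.card_fin,
    ← Matrix.adjugate_apply, ← Matrix.adjugate_apply] at hadj
  obtain ⟨hadj0, hadjl, hadju⟩ := hadj
  have hadjt0 : 0 ≤ Mt.adjugate i j := le_trans (by positivity) hadjl
  -- inverse entries
  have hMinvE : M⁻¹ i j = M.adjugate i j / M.det := by
    rw [Matrix.inv_def, Matrix.smul_apply, Ring.inverse_eq_inv', smul_eq_mul,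
      div_eq_inv_mul]
  have hMtinvE : Mt⁻¹ i j = Mt.adjugate i j / Mt.det := by
    rw [Matrix.inv_def, Matrix.smul_apply, Ring.inverse_eq_inv', smul_eq_mul,
      div_eq_inv_mul]
  rw [hMinvE, hMtinvE]
  constructor
  · rw [div_mul_div_comm]
    exact div_le_div₀ hadjt0 hadjl hdMt hdMu
  · rw [div_mul_div_comm]
    exact div_le_div₀ (by positivity) hadju (by positivity) hdMl
end

section
/- Let M and M̃ be n×n nonsingular M-matrices with M𝟏 ≥ 0 and M̃𝟏 ≥ 0 entrywise, and let 0 ≤ ε < 1 satisfy: for all i ≠ j, (1−ε)(−M_{ij}) ≤ −M̃_{ij} ≤ (1+ε)(−M_{ij}), and for all i, (1−ε)(M𝟏)_i ≤ (M̃𝟏)_i ≤ (1+ε)(M𝟏)_i. Then (1−ε)^n · det M ≤ det M̃ ≤ (1+ε)^n · det M. -/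
open Matrix Finset

lemma aux_det_nonneg {n : ℕ} (A : Matrix (Fin n) (Fin n) ℝ)
    (h : ∀ i, ∑ j ∈ Finset.univ.erase i, |A i j| ≤ A i i) : 0 ≤ A.det := by
  rcases Nat.eq_zero_or_pos n with hn | hn
  · subst hn; simp [Matrix.det_fin_zero]
  by_contra hneg
  push_neg at hneg
  have hdiag : ∀ i, 0 ≤ A i i := fun i =>
    le_trans (Finset.sum_nonneg fun j _ => abs_nonneg _) (h i)
  set p : ℝ → ℝ := fun t => (A + t • (1 : Matrix (Fin n) (Fin n) ℝ)).det with hp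
  have hc : Continuous p := by
    apply Continuous.matrix_det
    exact continuous_const.add (continuous_id.smul continuous_const)
  have hne : ∀ t : ℝ, 0 < t → p t ≠ 0 := by
    intro t ht
    apply det_ne_zero_of_sum_row_lt_diag
    intro k
    have h1 : ∑ j ∈ Finset.univ.erase k, ‖(A + t • (1 : Matrix (Fin n) (Fin n) ℝ)) k j‖
        = ∑ j ∈ Finset.univ.erase k, |A k j| := by
      apply Finset.sum_congr rfl
      intro j hj
      have hjk : j ≠ k := Finset.ne_of_mem_erase hj
      simp [Matrix.add_apply, Matrix.smul_apply, Matrix.one_apply, hjk.symm, Real.norm_eq_abs]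
    rw [h1]
    have h2 : (A + t • (1 : Matrix (Fin n) (Fin n) ℝ)) k k = A k k + t := by
      simp [Matrix.add_apply, Matrix.smul_apply, Matrix.one_apply]
    rw [h2, Real.norm_eq_abs, abs_of_nonneg (by linarith [hdiag k])]
    calc ∑ j ∈ Finset.univ.erase k, |A k j| ≤ A k k := h k
      _ < A k k + t := by linarith
  -- positivity for large t
  have hq : Continuous fun s : ℝ => (s • A + 1 : Matrix (Fin n) (Fin n) ℝ).det := by
    apply Continuous.matrix_det
    exact (continuous_id.smul continuous_const).add continuous_const
  have h0 : (0:ℝ) < ((0:ℝ) • A + 1 : Matrix (Fin n) (Fin n) ℝ).det := by simp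
  have hev : ∀ᶠ s in nhds (0:ℝ), 0 < (s • A + 1 : Matrix (Fin n) (Fin n) ℝ).det := by
    have := (hq.tendsto 0).eventually (eventually_gt_nhds h0)
    simpa using this
  obtain ⟨δ, hδ0, hδ⟩ := Metric.eventually_nhds_iff.mp hev
  set T : ℝ := max 1 (2 / δ) with hT
  have hT0 : (0:ℝ) < T := lt_of_lt_of_le one_pos (le_max_left _ _)
  have hinv : |(1:ℝ)/T| < δ := by
    rw [abs_of_pos (by positivity), div_lt_iff₀ hT0]
    have h2d : 2 / δ ≤ T := le_max_right _ _
    have : 2 / δ * δ ≤ T * δ := mul_le_mul_of_nonneg_right h2d (le_of_lt hδ0)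
    rw [div_mul_cancel₀] at this
    · linarith
    · exact ne_of_gt hδ0
  have hpT : 0 < p T := by
    have hqpos : 0 < ((1/T) • A + 1 : Matrix (Fin n) (Fin n) ℝ).det := by
      apply hδ
      rw [Real.dist_eq, sub_zero]
      exact hinv
    have heq : p T = T ^ n * ((1/T) • A + 1 : Matrix (Fin n) (Fin n) ℝ).det := by
      show (A + T • (1 : Matrix (Fin n) (Fin n) ℝ)).det = _
      have : A + T • (1 : Matrix (Fin n) (Fin n) ℝ) = T • ((1/T) • A + 1) := by
        rw [smul_add, smul_smul]
        rw [mul_one_div, div_self (ne_of_gt hT0), one_smul]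
      rw [this, Matrix.det_smul]
      simp
    rw [heq]
    positivity
  have hp0 : p 0 < 0 := by simpa [hp] using hneg
  have := intermediate_value_Icc (le_of_lt hT0) (hc.continuousOn)
  have hmem : (0:ℝ) ∈ Set.Icc (p 0) (p T) := ⟨le_of_lt hp0, le_of_lt hpT⟩
  obtain ⟨t, ht, hpt⟩ := this hmem
  rcases eq_or_lt_of_le ht.1 with h0t | h0t
  · rw [← h0t] at hpt; linarith [hp0, hpt ▸ hp0]
  · exact hne t h0t hpt


lemma aux_expand {n : ℕ} (N : Matrix (Fin n) (Fin n) ℝ) :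
    N.det = ∑ g : Fin n → Fin n,
      (∏ i, (if g i = i then ∑ k, N i k else -(N i (g i)))) *
      Matrix.det (fun i k => (if k = i then (1:ℝ) else 0) - (if g i ≠ i ∧ k = g i then 1 else 0)) := by
  classical
  set v : Fin n → Fin n → (Fin n → ℝ) :=
    fun i j k => (if k = i then 1 else 0) - (if j ≠ i ∧ k = j then 1 else 0) with hv
  set w : Fin n → Fin n → ℝ := fun i j => if j = i then ∑ k, N i k else -(N i j) with hw
  have hdecomp : N = fun i => ∑ j, w i j • v i j := by
    funext i k
    simp only [Finset.sum_apply, Pi.smul_apply, smul_eq_mul, hv, hw]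
    by_cases hk : k = i
    · have hterm : ∀ j : Fin n, (if j = i then ∑ l, N i l else -(N i j)) *
          ((if k = i then (1:ℝ) else 0) - (if j ≠ i ∧ k = j then 1 else 0))
          = (if j = i then ∑ l, N i l else -(N i j)) := by
        intro j
        have h2 : ¬ (j ≠ i ∧ k = j) := by
          rintro ⟨h1, h2⟩
          exact h1 (by rw [← h2]; exact hk)
        rw [if_pos hk, if_neg h2, sub_zero, mul_one]
      rw [Finset.sum_congr rfl (fun j _ => hterm j)]
      have e1 : ∑ j, (if j = i then (∑ l, N i l) else -(N i j))
          = (∑ l, N i l) + ∑ j ∈ Finset.univ.erase i, -(N i j) := by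
        rw [← Finset.add_sum_erase _ _ (Finset.mem_univ i), if_pos rfl]
        congr 1
        exact Finset.sum_congr rfl fun j hj => if_neg (Finset.ne_of_mem_erase hj)
      have e2 : ∑ l, N i l = N i i + ∑ l ∈ Finset.univ.erase i, N i l :=
        (Finset.add_sum_erase _ _ (Finset.mem_univ i)).symm
      rw [e1, e2, Finset.sum_neg_distrib, hk]
      ring
    · have hterm : ∀ j : Fin n, (if j = i then ∑ l, N i l else -(N i j)) *
          ((if k = i then (1:ℝ) else 0) - (if j ≠ i ∧ k = j then 1 else 0))
          = (if j = k then N i k else 0) := by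
        intro j
        by_cases hj : j = k
        · have hji : j ≠ i := by rw [hj]; exact hk
          have hcond : (j ≠ i ∧ k = j) := ⟨hji, hj.symm⟩
          rw [if_pos hj, if_neg hji, if_neg hk, if_pos hcond, hj]
          ring
        · by_cases hji : j = i
          · have hcond : ¬ (j ≠ i ∧ k = j) := fun h => h.1 hji
            rw [if_neg hj, if_pos hji, if_neg hk, if_neg hcond]
            ring
          · have hcond : ¬ (j ≠ i ∧ k = j) := fun h => hj (h.2.symm)
            rw [if_neg hj, if_neg hji, if_neg hk, if_neg hcond]
            ring
      rw [Finset.sum_congr rfl (fun j _ => hterm j)]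
      simp
  calc N.det = Matrix.detRowAlternating (fun i => ∑ j, w i j • v i j) := by rw [← hdecomp]; rfl
    _ = ∑ g : Fin n → Fin n,
        (Matrix.detRowAlternating (R := ℝ) (n := Fin n)).toMultilinearMap
          (fun i => w i (g i) • v i (g i)) :=
      (Matrix.detRowAlternating (R := ℝ) (n := Fin n)).toMultilinearMap.map_sum
        (fun i j => w i j • v i j)
    _ = ∑ g : Fin n → Fin n, (∏ i, w i (g i)) * Matrix.det (fun i => v i (g i)) := by
      refine Finset.sum_congr rfl fun g _ => ?_
      rw [MultilinearMap.map_smul_univ]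
      rfl
    _ = _ := by
      refine Finset.sum_congr rfl fun g _ => ?_
      rfl


lemma aux_E_det_nonneg {n : ℕ} (g : Fin n → Fin n) :
    0 ≤ Matrix.det (fun i k =>
      (if k = i then (1:ℝ) else 0) - (if g i ≠ i ∧ k = g i then 1 else 0)) := by
  apply aux_det_nonneg
  intro i
  have hdiag : ((if (i:Fin n) = i then (1:ℝ) else 0) - (if g i ≠ i ∧ i = g i then 1 else 0))
      = 1 := by
    have hc : ¬ (g i ≠ i ∧ i = g i) := by rintro ⟨h1, h2⟩; exact h1 h2.symm
    rw [if_pos rfl, if_neg hc, sub_zero]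
  show ∑ j ∈ Finset.univ.erase i,
      |(if j = i then (1:ℝ) else 0) - (if g i ≠ i ∧ j = g i then 1 else 0)| ≤ _
  rw [show ((if (i:Fin n) = i then (1:ℝ) else 0) - (if g i ≠ i ∧ i = g i then 1 else 0)) = 1
    from hdiag]
  by_cases hg : g i = i
  · have : ∀ j ∈ Finset.univ.erase i,
        |(if j = i then (1:ℝ) else 0) - (if g i ≠ i ∧ j = g i then 1 else 0)| = 0 := by
      intro j hj
      rw [if_neg (Finset.ne_of_mem_erase hj), if_neg (fun h => h.1 hg), sub_zero, abs_zero]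
    rw [Finset.sum_congr rfl this, Finset.sum_const_zero]
    norm_num
  · have : ∀ j ∈ Finset.univ.erase i,
        |(if j = i then (1:ℝ) else 0) - (if g i ≠ i ∧ j = g i then 1 else 0)|
          = (if j = g i then (1:ℝ) else 0) := by
      intro j hj
      rw [if_neg (Finset.ne_of_mem_erase hj)]
      by_cases hjg : j = g i
      · rw [if_pos ⟨hg, hjg⟩, if_pos hjg]; norm_num
      · rw [if_neg (fun h => hjg h.2), if_neg hjg, sub_zero, abs_zero]
    rw [Finset.sum_congr rfl this, Finset.sum_ite_eq' _ (g i)]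
    rw [if_pos (Finset.mem_erase.mpr ⟨hg, Finset.mem_univ _⟩)]

/-- Bound on the determinant of a componentwise-perturbed nonsingular M-matrix. -/
theorem mmatrix_det_componentwise_bound
    {n : ℕ} (M Mt : Matrix (Fin n) (Fin n) ℝ) (ε : ℝ)
    (hMoff : ∀ i j, i ≠ j → M i j ≤ 0)
    (hMtoff : ∀ i j, i ≠ j → Mt i j ≤ 0)
    (hMdet : IsUnit M.det) (hMtdet : IsUnit Mt.det)
    (hMinv : ∀ i j, 0 ≤ M⁻¹ i j) (hMtinv : ∀ i j, 0 ≤ Mt⁻¹ i j)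
    (hMrow : ∀ i, 0 ≤ ∑ j, M i j) (hMtrow : ∀ i, 0 ≤ ∑ j, Mt i j)
    (hε0 : 0 ≤ ε) (hε1 : ε < 1)
    (hoff : ∀ i j, i ≠ j →
      (1 - ε) * (-(M i j)) ≤ -(Mt i j) ∧ -(Mt i j) ≤ (1 + ε) * (-(M i j)))
    (hrow : ∀ i, (1 - ε) * (∑ j, M i j) ≤ (∑ j, Mt i j) ∧
      (∑ j, Mt i j) ≤ (1 + ε) * (∑ j, M i j)) :
    (1 - ε) ^ n * M.det ≤ Mt.det ∧ Mt.det ≤ (1 + ε) ^ n * M.det := by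
  classical
  -- the weight functions
  have hwnn : ∀ (i j : Fin n), 0 ≤ (if j = i then ∑ k, M i k else -(M i j)) := by
    intro i j
    by_cases hj : j = i
    · rw [if_pos hj]; exact hMrow i
    · rw [if_neg hj]; exact neg_nonneg.mpr (hMoff i j (fun h => hj (h.symm ▸ rfl)))
  have hwtnn : ∀ (i j : Fin n), 0 ≤ (if j = i then ∑ k, Mt i k else -(Mt i j)) := by
    intro i j
    by_cases hj : j = i
    · rw [if_pos hj]; exact hMtrow i
    · rw [if_neg hj]; exact neg_nonneg.mpr (hMtoff i j (fun h => hj (h.symm ▸ rfl)))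
  have hbnd : ∀ (i j : Fin n),
      (1 - ε) * (if j = i then ∑ k, M i k else -(M i j))
        ≤ (if j = i then ∑ k, Mt i k else -(Mt i j)) ∧
      (if j = i then ∑ k, Mt i k else -(Mt i j))
        ≤ (1 + ε) * (if j = i then ∑ k, M i k else -(M i j)) := by
    intro i j
    by_cases hj : j = i
    · simp only [if_pos hj]; exact hrow i
    · simp only [if_neg hj]
      exact hoff i j (fun h => hj (h.symm ▸ rfl))
  rw [aux_expand M, aux_expand Mt]
  constructor
  · rw [Finset.mul_sum]
    apply Finset.sum_le_sum
    intro g _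
    rw [← mul_assoc]
    apply mul_le_mul_of_nonneg_right _ (aux_E_det_nonneg g)
    calc (1 - ε) ^ n * ∏ i, (if g i = i then ∑ k, M i k else -(M i (g i)))
        = ∏ i, (1 - ε) * (if g i = i then ∑ k, M i k else -(M i (g i))) := by
          rw [Finset.prod_mul_distrib, Finset.prod_const, Finset.card_univ, Fintype.card_fin]
      _ ≤ ∏ i, (if g i = i then ∑ k, Mt i k else -(Mt i (g i))) := by
          apply Finset.prod_le_prod
          · intro i _; exact mul_nonneg (by linarith) (hwnn i (g i))
          · intro i _; exact (hbnd i (g i)).1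
  · rw [Finset.mul_sum]
    apply Finset.sum_le_sum
    intro g _
    rw [← mul_assoc]
    apply mul_le_mul_of_nonneg_right _ (aux_E_det_nonneg g)
    calc ∏ i, (if g i = i then ∑ k, Mt i k else -(Mt i (g i)))
        ≤ ∏ i, (1 + ε) * (if g i = i then ∑ k, M i k else -(M i (g i))) := by
          apply Finset.prod_le_prod
          · intro i _; exact hwtnn i (g i)
          · intro i _; exact (hbnd i (g i)).2
      _ = (1 + ε) ^ n * ∏ i, (if g i = i then ∑ k, M i k else -(M i (g i))) := by
          rw [Finset.prod_mul_distrib, Finset.prod_const, Finset.card_univ, Fintype.card_fin]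
end

section
/- Let M and M̃ be n×n nonsingular M-matrices with M𝟏 ≥ 0 and M̃𝟏 ≥ 0 entrywise, and let 0 ≤ ε < 1 satisfy: for all i ≠ j, (1−ε)(−M_{ij}) ≤ −M̃_{ij} ≤ (1+ε)(−M_{ij}), and for all i, (1−ε)(M𝟏)_i ≤ (M̃𝟏)_i ≤ (1+ε)(M𝟏)_i. Then, entrywise, (1−ε)^{n−1} · adj(M) ≤ adj(M̃) ≤ (1+ε)^{n−1} · adj(M), where adj denotes the adjugate matrix. -/
open Matrix Finset

namespace MMatrixAux

/-- standard basis row vector -/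
noncomputable def sgl {q : ℕ} (i : Fin q) : Fin q → ℝ := Pi.single i 1

lemma sgl_apply {q : ℕ} (i c : Fin q) : sgl i c = if c = i then 1 else 0 := by
  rw [sgl, Pi.single_apply]

/-- Class of matrices with nonpositive off-diagonal entries and nonnegative row sums. -/
def ClassC {n : ℕ} (M : Matrix (Fin n) (Fin n) ℝ) : Prop :=
  (∀ i j, i ≠ j → M i j ≤ 0) ∧ (∀ i, 0 ≤ ∑ j, M i j)

/-- Nonnegativity of all adjugate entries of class-C matrices of size `n`. -/
def P (n : ℕ) : Prop :=
  ∀ M : Matrix (Fin n) (Fin n) ℝ, ClassC M → ∀ i j, 0 ≤ M.adjugate i j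

lemma adjugate_apply' {q : ℕ} (A : Matrix (Fin q) (Fin q) ℝ) (i j : Fin q) :
    A.adjugate i j = (A.updateRow j (sgl i)).det := adjugate_apply A i j

lemma classC_sub {m : ℕ} {A : Matrix (Fin (m + 1)) (Fin (m + 1)) ℝ} (hA : ClassC A)
    (k : Fin (m + 1)) : ClassC (A.submatrix k.succAbove k.succAbove) := by
  constructor
  · intro x y hxy
    exact hA.1 _ _ (fun h => hxy (Fin.succAbove_right_injective h))
  · intro x
    have h : ∑ c, A (k.succAbove x) c
        = A (k.succAbove x) k + ∑ y, A (k.succAbove x) (k.succAbove y) :=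
      Fin.sum_univ_succAbove (fun c => A (k.succAbove x) c) k
    have h2 : A (k.succAbove x) k ≤ 0 := hA.1 _ _ (Fin.succAbove_ne k x)
    have h3 := hA.2 (k.succAbove x)
    simp only [submatrix_apply]
    linarith

lemma sum_updateCol {m : ℕ} (A : Matrix (Fin (m + 1)) (Fin (m + 1)) ℝ)
    (l : Fin (m + 1)) (g : Fin (m + 1) → ℝ) (r : Fin (m + 1)) :
    ∑ c, (A.updateCol l g) r c = (∑ c, A r c) - A r l + g r := by
  have h : ∀ c, (A.updateCol l g) r c = A r c + (if c = l then g r - A r l else 0) := by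
    intro c
    by_cases hc : c = l
    · subst hc; simp [updateCol_apply]
    · simp [updateCol_apply, hc]
  rw [Finset.sum_congr rfl (fun c _ => h c), Finset.sum_add_distrib,
    Finset.sum_ite_eq' Finset.univ l (fun _ => g r - A r l)]
  simp; ring

lemma classC_merge {m : ℕ} {A : Matrix (Fin (m + 1)) (Fin (m + 1)) ℝ} (hA : ClassC A)
    {k l : Fin (m + 1)} (hlk : l ≠ k) :
    ClassC ((A.updateCol l (fun r => A r l + A r k)).submatrix k.succAbove k.succAbove) := by
  constructor
  · intro x y hxy
    simp only [submatrix_apply, updateCol_apply]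
    by_cases hyl : k.succAbove y = l
    · rw [if_pos hyl]
      have hx1 : k.succAbove x ≠ l := fun h => hxy (Fin.succAbove_right_injective (h.trans hyl.symm))
      have hx2 : k.succAbove x ≠ k := Fin.succAbove_ne k x
      have e1 := hA.1 _ _ hx1
      have e2 := hA.1 _ _ hx2
      linarith
    · rw [if_neg hyl]
      exact hA.1 _ _ (fun h => hxy (Fin.succAbove_right_injective h))
  · intro x
    have h : ∑ c, (A.updateCol l (fun r => A r l + A r k)) (k.succAbove x) c
        = (A.updateCol l (fun r => A r l + A r k)) (k.succAbove x) k
          + ∑ y, (A.updateCol l (fun r => A r l + A r k)) (k.succAbove x) (k.succAbove y) :=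
      Fin.sum_univ_succAbove
        (fun c => (A.updateCol l (fun r => A r l + A r k)) (k.succAbove x) c) k
    have hk : (A.updateCol l (fun r => A r l + A r k)) (k.succAbove x) k
        = A (k.succAbove x) k := by
      rw [updateCol_apply, if_neg (fun h => hlk h.symm)]
    have hsum := sum_updateCol A l (fun r => A r l + A r k) (k.succAbove x)
    have h3 := hA.2 (k.succAbove x)
    simp only [submatrix_apply]
    rw [hsum, hk] at h
    linarith

lemma single_comp_succAbove {m : ℕ} {k i : Fin (m + 1)} {i' : Fin m}
    (hi' : k.succAbove i' = i) :
    (fun y => sgl i (k.succAbove y)) = sgl i' := by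
  funext y
  rw [sgl_apply, sgl_apply]
  congr 1
  simp only [eq_iff_iff]
  constructor
  · intro h; exact Fin.succAbove_right_injective (h.trans hi'.symm)
  · intro h; rw [h, hi']

lemma neg_one_pow_self_add {k : ℕ} : ((-1 : ℝ)) ^ (k + k) = 1 := by
  rw [← two_mul, pow_mul]; norm_num

/-- Key determinant R1: replacing row `k` by `e_k` in `updateRow A j e_i`. -/
lemma R1 {m : ℕ} (hind : P m) (A : Matrix (Fin (m + 1)) (Fin (m + 1)) ℝ) (hA : ClassC A)
    (i j k : Fin (m + 1)) (hjk : j ≠ k) :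
    0 ≤ ((A.updateRow j (sgl i)).updateRow k (sgl k)).det := by
  set Y := A.updateRow j (sgl i) with hY
  have h1 : ((Y.updateRow k (sgl k))).det = Y.adjugate k k := (adjugate_apply' Y k k).symm
  rw [h1, adjugate_fin_succ_eq_det_submatrix, neg_one_pow_self_add, one_mul]
  obtain ⟨j', hj'⟩ := Fin.exists_succAbove_eq hjk
  have hsub : Y.submatrix k.succAbove k.succAbove
      = updateRow (A.submatrix k.succAbove k.succAbove) j'
        (fun y => sgl i (k.succAbove y)) := by
    ext x y
    by_cases hx : x = j'
    · subst hx
      simp [hY, hj', submatrix_apply, Matrix.updateRow_self]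
    · have hxj : k.succAbove x ≠ j := by
        rw [← hj']; exact fun h => hx (Fin.succAbove_right_injective h)
      simp [hY, submatrix_apply, Matrix.updateRow_ne hxj, Matrix.updateRow_ne hx]
  by_cases hik : i = k
  · subst hik
    have hz : ((A.submatrix i.succAbove i.succAbove).updateRow j'
        (fun y => sgl i (i.succAbove y))).det = 0 := by
      apply det_eq_zero_of_row_eq_zero j'
      intro y
      rw [Matrix.updateRow_self, sgl_apply, if_neg (Fin.succAbove_ne i y)]
    rw [hsub, hz]
  · obtain ⟨i', hi'⟩ := Fin.exists_succAbove_eq hik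
    rw [hsub, single_comp_succAbove hi', ← adjugate_apply']
    exact hind _ (classC_sub hA k) i' j'

/-- Key determinant R2: replacing row `k` by `e_k - e_l` in `updateRow A j e_i`. -/
lemma R2 {m : ℕ} (hind : P m) (A : Matrix (Fin (m + 1)) (Fin (m + 1)) ℝ) (hA : ClassC A)
    (i j k l : Fin (m + 1)) (hjk : j ≠ k) (hlk : l ≠ k) :
    0 ≤ ((A.updateRow j (sgl i)).updateRow k (sgl k - sgl l)).det := by
  set Y := A.updateRow j (sgl i) with hY
  set N := Y.updateRow k (sgl k - sgl l) with hN
  have hdet : N.det = (N.updateCol l (fun r => N r l + (1 : ℝ) • N r k)).det :=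
    (det_updateCol_add_smul_self N hlk 1).symm
  set N' := N.updateCol l (fun r => N r l + (1 : ℝ) • N r k) with hN'
  have hNk : N k = sgl k - sgl l := Matrix.updateRow_self
  have hNj : N j = sgl i := by
    rw [hN, Matrix.updateRow_ne hjk, hY, Matrix.updateRow_self]
  have hrowk : N' k = sgl k := by
    funext c
    by_cases hc : c = l
    · subst hc
      have h : N' k c = N k c + N k k := by
        simp [hN', updateCol_apply]
      rw [h, hNk]
      simp [Pi.sub_apply, sgl_apply, hlk, hlk.symm]
    · have h : N' k c = N k c := by simp [hN', updateCol_apply, hc]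
      rw [h, hNk]
      simp [Pi.sub_apply, sgl_apply, hc]
  have h2 : N'.det = N'.adjugate k k := by
    rw [adjugate_apply', ← hrowk, Matrix.updateRow_eq_self]
  rw [hdet, h2, adjugate_fin_succ_eq_det_submatrix, neg_one_pow_self_add, one_mul]
  obtain ⟨j', hj'⟩ := Fin.exists_succAbove_eq hjk
  obtain ⟨l', hl'⟩ := Fin.exists_succAbove_eq hlk
  set C := (A.updateCol l (fun r => A r l + A r k)).submatrix k.succAbove k.succAbove with hC
  have hoffrow : ∀ x y, x ≠ j' → N'.submatrix k.succAbove k.succAbove x y = C x y := by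
    intro x y hx
    have hxk : k.succAbove x ≠ k := Fin.succAbove_ne k x
    have hxj : k.succAbove x ≠ j := by
      rw [← hj']; exact fun h => hx (Fin.succAbove_right_injective h)
    have hNrow : ∀ c, N (k.succAbove x) c = A (k.succAbove x) c := by
      intro c; rw [hN, Matrix.updateRow_ne hxk, hY, Matrix.updateRow_ne hxj]
    simp only [submatrix_apply, hN', updateCol_apply, hC, one_smul]
    by_cases hyl : k.succAbove y = l
    · rw [if_pos hyl, if_pos hyl, hNrow, hNrow]
    · rw [if_neg hyl, if_neg hyl, hNrow]
  have hj'row : ∀ y, N'.submatrix k.succAbove k.succAbove j' y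
      = (if k.succAbove y = l then (sgl i l + sgl i k) else sgl i (k.succAbove y)) := by
    intro y
    simp only [submatrix_apply, hj', hN', updateCol_apply, one_smul, hNj]
  by_cases hik : i = k
  · have hclaim : N'.submatrix k.succAbove k.succAbove = updateRow C j' (sgl l') := by
      ext x y
      by_cases hx : x = j'
      · subst hx
        rw [Matrix.updateRow_self, hj'row y]
        have e1 : sgl i l = 0 := by
          rw [sgl_apply, if_neg (fun h : l = i => hlk (h.trans hik))]
        have e2 : sgl i k = (1 : ℝ) := by rw [sgl_apply, if_pos hik.symm]
        have e3 : sgl i (k.succAbove y) = 0 := by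
          rw [sgl_apply, if_neg (fun h : k.succAbove y = i => Fin.succAbove_ne k y (h.trans hik))]
        have hyiff : (k.succAbove y = l) = (y = l') := by
          simp only [eq_iff_iff]
          constructor
          · intro h; exact Fin.succAbove_right_injective (h.trans hl'.symm)
          · intro h; rw [h, hl']
        rw [e1, e2, e3, zero_add, sgl_apply]
        by_cases hy : y = l'
        · rw [if_pos hy, if_pos (by rw [hy, hl'])]
        · rw [if_neg hy,
            if_neg (fun h => hy (Fin.succAbove_right_injective (h.trans hl'.symm)))]
      · rw [Matrix.updateRow_ne hx]; exact hoffrow x y hx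
    rw [hclaim, ← adjugate_apply']
    exact hind C (classC_merge hA hlk) l' j'
  · obtain ⟨i', hi'⟩ := Fin.exists_succAbove_eq hik
    have hclaim : N'.submatrix k.succAbove k.succAbove = updateRow C j' (sgl i') := by
      ext x y
      by_cases hx : x = j'
      · subst hx
        rw [Matrix.updateRow_self, hj'row y]
        have e2 : sgl i k = 0 := by
          rw [sgl_apply, if_neg (fun h => hik h.symm)]
        have etarget : sgl i' y = if k.succAbove y = i then 1 else 0 := by
          rw [sgl_apply]
          congr 1
          simp only [eq_iff_iff]
          constructor
          · intro h; rw [h, hi']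
          · intro h; exact Fin.succAbove_right_injective (h.trans hi'.symm)
        rw [e2, add_zero, etarget]
        by_cases hyl : k.succAbove y = l
        · rw [if_pos hyl, hyl, sgl_apply]
        · rw [if_neg hyl, sgl_apply]
      · rw [Matrix.updateRow_ne hx]; exact hoffrow x y hx
    rw [hclaim, ← adjugate_apply']
    exact hind C (classC_merge hA hlk) i' j'

lemma det_updateRow_finset_sum {m : ℕ} (X : Matrix (Fin (m + 1)) (Fin (m + 1)) ℝ)
    (k : Fin (m + 1)) {ι : Type*} [DecidableEq ι] (s : Finset ι) (f : ι → (Fin (m + 1) → ℝ)) :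
    (X.updateRow k (∑ l ∈ s, f l)).det = ∑ l ∈ s, (X.updateRow k (f l)).det := by
  induction s using Finset.induction_on with
  | empty =>
      simp only [Finset.sum_empty]
      exact det_eq_zero_of_row_eq_zero k (fun j => by rw [Matrix.updateRow_self]; rfl)
  | @insert a s h ih =>
      rw [Finset.sum_insert h, Finset.sum_insert h, det_updateRow_add, ih]

/-- Row-step monotonicity. -/
lemma rowstep {m : ℕ} (hind : P m) (A : Matrix (Fin (m + 1)) (Fin (m + 1)) ℝ) (hA : ClassC A)
    (k : Fin (m + 1)) (w : Fin (m + 1) → ℝ)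
    (hw1 : ∀ l, l ≠ k → w l ≤ A k l) (hw2 : ∑ l, A k l ≤ ∑ l, w l) :
    ∀ i j, A.adjugate i j ≤ (A.updateRow k w).adjugate i j := by
  intro i j
  by_cases hjk : j = k
  · rw [hjk]
    have h : (A.updateRow k w).adjugate i k = A.adjugate i k := by
      rw [adjugate_apply', adjugate_apply']
      congr 1
      ext x y
      by_cases hx : x = k
      · subst hx; rw [Matrix.updateRow_self, Matrix.updateRow_self]
      · simp [Matrix.updateRow_ne hx]
    rw [h]
  · rw [adjugate_apply', adjugate_apply']
    have hcomm : (A.updateRow k w).updateRow j (sgl i)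
        = (A.updateRow j (sgl i)).updateRow k w := by
      ext x y
      by_cases hx1 : x = j
      · subst hx1
        rw [Matrix.updateRow_self, Matrix.updateRow_ne hjk, Matrix.updateRow_self]
      · by_cases hx2 : x = k
        · subst hx2
          rw [Matrix.updateRow_ne hx1, Matrix.updateRow_self, Matrix.updateRow_self]
        · rw [Matrix.updateRow_ne hx1, Matrix.updateRow_ne hx2, Matrix.updateRow_ne hx2,
            Matrix.updateRow_ne hx1]
    rw [hcomm]
    have hXk : (A.updateRow j (sgl i)) k = A k :=
      Matrix.updateRow_ne (fun h => hjk h.symm)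
    have hw : w = (A.updateRow j (sgl i)) k + (w - A k) := by
      rw [hXk]; funext c; simp
    have hsplit : ((A.updateRow j (sgl i)).updateRow k w).det
        = (A.updateRow j (sgl i)).det + ((A.updateRow j (sgl i)).updateRow k (w - A k)).det := by
      calc ((A.updateRow j (sgl i)).updateRow k w).det
          = ((A.updateRow j (sgl i)).updateRow k
              ((A.updateRow j (sgl i)) k + (w - A k))).det := by rw [← hw]
        _ = ((A.updateRow j (sgl i)).updateRow k ((A.updateRow j (sgl i)) k)).det
            + ((A.updateRow j (sgl i)).updateRow k (w - A k)).det :=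
              det_updateRow_add (A.updateRow j (sgl i)) k _ _
        _ = (A.updateRow j (sgl i)).det
            + ((A.updateRow j (sgl i)).updateRow k (w - A k)).det := by
              rw [Matrix.updateRow_eq_self]
    set v : Fin (m + 1) → ℝ := w - A k with hv
    have hvl : ∀ c, v c = w c - A k c := fun c => rfl
    have hvdecomp : v = (∑ l, v l) • sgl k
        + ∑ l ∈ Finset.univ.erase k, (-(v l)) • (sgl k - sgl l) := by
      funext x
      simp only [Pi.add_apply, Pi.smul_apply, Finset.sum_apply, smul_eq_mul]
      by_cases hx : x = k
      · rw [hx]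
        have e1 : ∀ l ∈ Finset.univ.erase k,
            (-(v l)) * ((sgl k - sgl l) k) = -(v l) := by
          intro l hl
          have hlk : l ≠ k := Finset.ne_of_mem_erase hl
          rw [Pi.sub_apply, sgl_apply, sgl_apply, if_pos rfl,
            if_neg (fun h : k = l => hlk h.symm)]
          ring
        rw [Finset.sum_congr rfl e1, sgl_apply, if_pos rfl, mul_one]
        have e2 : ∑ l ∈ Finset.univ.erase k, -(v l) = -(∑ l, v l) + v k := by
          rw [Finset.sum_neg_distrib, Finset.sum_erase_eq_sub (Finset.mem_univ k)]
          ring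
        rw [e2]
        ring
      · have hk0 : sgl k x = 0 := by rw [sgl_apply, if_neg hx]
        have e1 : ∀ l ∈ Finset.univ.erase k,
            (-(v l)) * ((sgl k - sgl l) x) = (if l = x then v x else 0) := by
          intro l hl
          rw [Pi.sub_apply, hk0, sgl_apply]
          by_cases hlx : l = x
          · rw [if_pos hlx, if_pos hlx.symm, hlx]; ring
          · rw [if_neg hlx, if_neg (fun h => hlx h.symm)]; ring
        rw [Finset.sum_congr rfl e1,
          Finset.sum_ite_eq' (Finset.univ.erase k) x (fun _ => v x),
          if_pos (Finset.mem_erase.mpr ⟨hx, Finset.mem_univ x⟩), hk0]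
        ring
    have hvdet : 0 ≤ ((A.updateRow j (sgl i)).updateRow k v).det := by
      rw [hvdecomp, det_updateRow_add, det_updateRow_smul, det_updateRow_finset_sum]
      have t1 : 0 ≤ (∑ l, v l) := by
        have e : ∑ l, v l = (∑ l, w l) - ∑ l, A k l := by
          rw [Finset.sum_congr rfl (fun c _ => hvl c), Finset.sum_sub_distrib]
        rw [e]; linarith
      have t2 := R1 hind A hA i j k hjk
      have t3 : 0 ≤ ∑ l ∈ Finset.univ.erase k,
          ((A.updateRow j (sgl i)).updateRow k ((-(v l)) • (sgl k - sgl l))).det := by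
        apply Finset.sum_nonneg
        intro l hl
        have hlk : l ≠ k := Finset.ne_of_mem_erase hl
        rw [det_updateRow_smul]
        refine mul_nonneg ?_ (R2 hind A hA i j k l hjk hlk)
        have e : -(v l) = A k l - w l := by rw [hvl]; ring
        rw [e]
        linarith [hw1 l hlk]
      linarith [mul_nonneg t1 t2]
    rw [hsplit]
    linarith

/-- Monotonicity of adjugate entries under parameter domination (size `m+1`). -/
lemma mono_aux {m : ℕ} (hind : P m) (A B : Matrix (Fin (m + 1)) (Fin (m + 1)) ℝ)
    (hA : ClassC A)
    (hoffd : ∀ i j, i ≠ j → B i j ≤ A i j)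
    (hrs : ∀ i, ∑ j, A i j ≤ ∑ j, B i j) :
    ∀ i j, A.adjugate i j ≤ B.adjugate i j := by
  classical
  set C : Finset (Fin (m + 1)) → Matrix (Fin (m + 1)) (Fin (m + 1)) ℝ :=
    fun S => Matrix.of (fun x y => if x ∈ S then B x y else A x y) with hCdef
  have hCapp : ∀ S x y, C S x y = if x ∈ S then B x y else A x y := fun S x y => rfl
  have hclassC : ∀ S, ClassC (C S) := by
    intro S
    constructor
    · intro x y hxy
      rw [hCapp]
      by_cases hx : x ∈ S
      · rw [if_pos hx]; exact le_trans (hoffd x y hxy) (hA.1 x y hxy)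
      · rw [if_neg hx]; exact hA.1 x y hxy
    · intro x
      by_cases hx : x ∈ S
      · rw [Finset.sum_congr rfl (fun y _ => by rw [hCapp, if_pos hx])]
        exact le_trans (hA.2 x) (hrs x)
      · rw [Finset.sum_congr rfl (fun y _ => by rw [hCapp, if_neg hx])]
        exact hA.2 x
  have hmain : ∀ S : Finset (Fin (m + 1)), ∀ i j, A.adjugate i j ≤ (C S).adjugate i j := by
    intro S
    induction S using Finset.induction_on with
    | empty =>
        intro i j
        have h : C ∅ = A := by ext x y; rw [hCapp]; simp
        rw [h]
    | @insert k S hk ih =>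
        intro i j
        have hstep := rowstep hind (C S) (hclassC S) k (B k)
          (fun l hl => by
            rw [hCapp, if_neg hk]
            exact hoffd k l (fun h => hl h.symm))
          (by
            rw [Finset.sum_congr rfl (fun y _ => by rw [hCapp, if_neg hk])]
            exact hrs k)
        have heq : (C S).updateRow k (B k) = C (insert k S) := by
          ext x y
          by_cases hx : x = k
          · subst hx
            rw [Matrix.updateRow_self, hCapp, if_pos (Finset.mem_insert_self x S)]
          · rw [Matrix.updateRow_ne hx, hCapp, hCapp]
            simp [Finset.mem_insert, hx]
        calc A.adjugate i j ≤ (C S).adjugate i j := ih i j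
          _ ≤ ((C S).updateRow k (B k)).adjugate i j := hstep i j
          _ = (C (insert k S)).adjugate i j := by rw [heq]
  intro i j
  have hBC : C Finset.univ = B := by ext x y; rw [hCapp, if_pos (Finset.mem_univ x)]
  have h := hmain Finset.univ i j
  rwa [hBC] at h

/-- All adjugate entries of class-C matrices are nonnegative. -/
lemma Pall : ∀ n, P n := by
  intro n
  induction n with
  | zero => intro M _ i j; exact i.elim0
  | succ m ih =>
      intro M hM i j
      cases m with
      | zero =>
          rw [adjugate_fin_one]
          by_cases h : i = j <;> simp [Matrix.one_apply, h]
      | succ m' =>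
          have h0 : ClassC (0 : Matrix (Fin (m' + 1 + 1)) (Fin (m' + 1 + 1)) ℝ) := by
            constructor
            · intro x y _; simp
            · intro x; simp
          have hmono := mono_aux ih (0 : Matrix (Fin (m' + 1 + 1)) (Fin (m' + 1 + 1)) ℝ) M h0
            (fun i j h => by simpa using hM.1 i j h)
            (fun i => by simpa using hM.2 i) i j
          have hz : (0 : Matrix (Fin (m' + 1 + 1)) (Fin (m' + 1 + 1)) ℝ).adjugate i j = 0 := by
            rw [adjugate_apply']
            obtain ⟨r, hr⟩ := exists_ne j
            apply det_eq_zero_of_row_eq_zero r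
            intro c
            rw [Matrix.updateRow_ne hr]
            rfl
          rw [hz] at hmono
          exact hmono

/-- Monotonicity of adjugate entries under parameter domination (any size). -/
lemma mono {n : ℕ} (A B : Matrix (Fin n) (Fin n) ℝ)
    (hA : ClassC A)
    (hoffd : ∀ i j, i ≠ j → B i j ≤ A i j)
    (hrs : ∀ i, ∑ j, A i j ≤ ∑ j, B i j) :
    ∀ i j, A.adjugate i j ≤ B.adjugate i j := by
  cases n with
  | zero => intro i j; exact i.elim0
  | succ m => exact mono_aux (Pall m) A B hA hoffd hrs

end MMatrixAux

open MMatrixAux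

/-- Componentwise bound on the adjugate of a componentwise-perturbed nonsingular M-matrix. -/
theorem mmatrix_adjugate_componentwise_bound
    {n : ℕ} (M Mt : Matrix (Fin n) (Fin n) ℝ) (ε : ℝ)
    (hMoff : ∀ i j, i ≠ j → M i j ≤ 0)
    (hMtoff : ∀ i j, i ≠ j → Mt i j ≤ 0)
    (hMdet : IsUnit M.det) (hMtdet : IsUnit Mt.det)
    (hMinv : ∀ i j, 0 ≤ M⁻¹ i j) (hMtinv : ∀ i j, 0 ≤ Mt⁻¹ i j)
    (hMrow : ∀ i, 0 ≤ ∑ j, M i j) (hMtrow : ∀ i, 0 ≤ ∑ j, Mt i j)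
    (hε0 : 0 ≤ ε) (hε1 : ε < 1)
    (hoff : ∀ i j, i ≠ j →
      (1 - ε) * (-(M i j)) ≤ -(Mt i j) ∧ -(Mt i j) ≤ (1 + ε) * (-(M i j)))
    (hrow : ∀ i, (1 - ε) * (∑ j, M i j) ≤ (∑ j, Mt i j) ∧
      (∑ j, Mt i j) ≤ (1 + ε) * (∑ j, M i j)) :
    ∀ i j, (1 - ε) ^ (n - 1) * M.adjugate i j ≤ Mt.adjugate i j ∧
      Mt.adjugate i j ≤ (1 + ε) ^ (n - 1) * M.adjugate i j := by
  intro i j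
  have hε1' : (0:ℝ) ≤ 1 - ε := by linarith
  have hε2' : (0:ℝ) ≤ 1 + ε := by linarith
  have hsmul_sum : ∀ (c : ℝ) (x : Fin n), ∑ y, (c • M) x y = c * ∑ y, M x y := by
    intro c x
    simp [Matrix.smul_apply, smul_eq_mul, Finset.mul_sum]
  constructor
  · have hclass : ClassC ((1 - ε) • M) := by
      constructor
      · intro x y hxy
        have h := hMoff x y hxy
        simp only [Matrix.smul_apply, smul_eq_mul]
        nlinarith
      · intro x
        rw [hsmul_sum]
        exact mul_nonneg hε1' (hMrow x)
    have hdom1 : ∀ x y, x ≠ y → Mt x y ≤ ((1 - ε) • M) x y := by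
      intro x y hxy
      have h := (hoff x y hxy).1
      simp only [Matrix.smul_apply, smul_eq_mul]
      linarith
    have hdom2 : ∀ x, ∑ y, ((1 - ε) • M) x y ≤ ∑ y, Mt x y := by
      intro x
      rw [hsmul_sum]
      exact (hrow x).1
    have h := mono ((1 - ε) • M) Mt hclass hdom1 hdom2 i j
    rw [adjugate_smul] at h
    simpa [Matrix.smul_apply, smul_eq_mul] using h
  · have hclassMt : ClassC Mt := ⟨hMtoff, hMtrow⟩
    have hdom1 : ∀ x y, x ≠ y → ((1 + ε) • M) x y ≤ Mt x y := by
      intro x y hxy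
      have h := (hoff x y hxy).2
      simp only [Matrix.smul_apply, smul_eq_mul]
      linarith
    have hdom2 : ∀ x, ∑ y, Mt x y ≤ ∑ y, ((1 + ε) • M) x y := by
      intro x
      rw [hsmul_sum]
      exact (hrow x).2
    have h := mono Mt ((1 + ε) • M) hclassMt hdom1 hdom2 i j
    rw [adjugate_smul] at h
    simpa [Matrix.smul_apply, smul_eq_mul] using h
end

section
/- Let a ∈ ℝⁿ with a ≥ 0 and let B be an entrywise nonnegative n×n×n tensor. Let m be the minimal nonnegative solution of x = a + Bx², and assume R_m = I − Bm: − B:m is invertible with R_m⁻¹ entrywise nonnegative. Set y = R_m⁻¹a. Then m and y have the same zero pattern: for every index i, m_i = 0 if and only if y_i = 0. -/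
open Matrix

/-- `(tapp B x y) i = Σ_{j,k} B i j k * x j * y k`, the tensor–vector–vector product. -/
def tapp {n : ℕ} (B : Fin n → Fin n → Fin n → ℝ) (x y : Fin n → ℝ) : Fin n → ℝ :=
  fun i => ∑ j, ∑ k, B i j k * x j * y k

/-- The matrix `Bx:`, satisfying `(Bx:) h = B x h`; `(Bx:)_{ij} = Σ_k b_{ikj} x_k`. -/
def matL {n : ℕ} (B : Fin n → Fin n → Fin n → ℝ) (x : Fin n → ℝ) :
    Matrix (Fin n) (Fin n) ℝ :=
  Matrix.of fun i j => ∑ k, B i k j * x k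

/-- The matrix `B:x`, satisfying `(B:x) h = B h x`; `(B:x)_{ij} = Σ_k b_{ijk} x_k`. -/
def matR {n : ℕ} (B : Fin n → Fin n → Fin n → ℝ) (x : Fin n → ℝ) :
    Matrix (Fin n) (Fin n) ℝ :=
  Matrix.of fun i j => ∑ k, B i j k * x k

/-- `R_x = I − Bx: − B:x`, the negative Jacobian of `x ↦ a + Bx² − x`. -/
def Rmat {n : ℕ} (B : Fin n → Fin n → Fin n → ℝ) (x : Fin n → ℝ) :
    Matrix (Fin n) (Fin n) ℝ :=
  1 - matL B x - matR B x

/-- The minimal solution `m` of `x = a + Bx²` and `y = R_m⁻¹ a` have the same zero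
pattern (Theorem `thm0` in the paper). -/
theorem zero_pattern_of_minimal_and_y
    {n : ℕ} (a : Fin n → ℝ) (B : Fin n → Fin n → Fin n → ℝ)
    (ha : ∀ i, 0 ≤ a i) (hB : ∀ i j k, 0 ≤ B i j k)
    (m : Fin n → ℝ)
    (hm0 : ∀ i, 0 ≤ m i)
    (hmsol : m = a + tapp B m m)
    (hmin : ∀ x : Fin n → ℝ, (∀ i, 0 ≤ x i) → x = a + tapp B x x → ∀ i, m i ≤ x i)
    (hdet : IsUnit (Rmat B m).det)
    (hinv : ∀ i j, 0 ≤ (Rmat B m)⁻¹ i j)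
    (y : Fin n → ℝ) (hy : y = (Rmat B m)⁻¹ *ᵥ a) :
    ∀ i, m i = 0 ↔ y i = 0 := by
  -- nonnegativity of the quadratic term
  have hBmm : ∀ i, 0 ≤ tapp B m m i := fun i =>
    Finset.sum_nonneg fun j _ => Finset.sum_nonneg fun k _ =>
      mul_nonneg (mul_nonneg (hB i j k) (hm0 j)) (hm0 k)
  have hsol : ∀ i, m i = a i + tapp B m m i := fun i => by
    have := congrFun hmsol i; simpa using this
  have ha0 : ∀ i, m i = 0 → a i = 0 := by
    intro i h
    have := hsol i
    have h1 := ha i; have h2 := hBmm i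
    linarith
  have ht0 : ∀ i, m i = 0 → tapp B m m i = 0 := by
    intro i h
    have := hsol i
    have h1 := ha i; have h2 := hBmm i
    linarith
  have hkey : ∀ i, m i = 0 → ∀ j k, B i j k * m j * m k = 0 := by
    intro i h j k
    have h1 : ∑ j, ∑ k, B i j k * m j * m k = 0 := ht0 i h
    have h2 := (Finset.sum_eq_zero_iff_of_nonneg (fun j _ =>
      Finset.sum_nonneg fun k _ =>
        mul_nonneg (mul_nonneg (hB i j k) (hm0 j)) (hm0 k))).mp h1 j (Finset.mem_univ j)
    exact (Finset.sum_eq_zero_iff_of_nonneg (fun k _ =>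
      mul_nonneg (mul_nonneg (hB i j k) (hm0 j)) (hm0 k))).mp h2 k (Finset.mem_univ k)
  -- entries of matL, matR are nonnegative
  have happ : ∀ (M : Matrix (Fin n) (Fin n) ℝ) (v : Fin n → ℝ) (i : Fin n),
      (M *ᵥ v) i = ∑ j, M i j * v j := fun M v i => rfl
  have hLnn : ∀ i j, 0 ≤ matL B m i j := by
    intro i j
    show (0:ℝ) ≤ ∑ k, B i k j * m k
    exact Finset.sum_nonneg fun k _ => mul_nonneg (hB i k j) (hm0 k)
  have hRnn : ∀ i j, 0 ≤ matR B m i j := by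
    intro i j
    show (0:ℝ) ≤ ∑ k, B i j k * m k
    exact Finset.sum_nonneg fun k _ => mul_nonneg (hB i j k) (hm0 k)
  -- block-zero structure: for i with m i = 0 and p with m p ≠ 0
  have hLz : ∀ i p, m i = 0 → m p ≠ 0 → matL B m i p = 0 := by
    intro i p h hp
    show (∑ k, B i k p * m k) = 0
    refine Finset.sum_eq_zero fun k _ => ?_
    have h0 := hkey i h k p
    exact (mul_eq_zero.mp h0).resolve_right hp
  have hRz : ∀ i p, m i = 0 → m p ≠ 0 → matR B m i p = 0 := by
    intro i p h hp
    show (∑ k, B i p k * m k) = 0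
    refine Finset.sum_eq_zero fun k _ => ?_
    have h0 := hkey i h p k
    have h1 : (B i p k * m k) * m p = 0 := by linear_combination h0
    exact (mul_eq_zero.mp h1).resolve_right hp
  -- R y = a
  have hRy : Rmat B m *ᵥ y = a := by
    rw [hy, Matrix.mulVec_mulVec, Matrix.mul_nonsing_inv _ hdet, Matrix.one_mulVec]
  -- m ≤ y
  have hRm : Rmat B m *ᵥ m = a - tapp B m m := by
    funext i
    have hL : (matL B m *ᵥ m) i = tapp B m m i := by
      rw [happ]
      show (∑ j, (∑ k, B i k j * m k) * m j) = ∑ j, ∑ k, B i j k * m j * m k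
      simp only [Finset.sum_mul]
      exact Finset.sum_comm ..
    have hR : (matR B m *ᵥ m) i = tapp B m m i := by
      rw [happ]
      show (∑ j, (∑ k, B i j k * m k) * m j) = ∑ j, ∑ k, B i j k * m j * m k
      simp only [Finset.sum_mul]
      exact Finset.sum_congr rfl fun j _ => Finset.sum_congr rfl fun k _ => by ring
    have : (Rmat B m *ᵥ m) i = m i - (matL B m *ᵥ m) i - (matR B m *ᵥ m) i := by
      simp [Rmat, Matrix.sub_mulVec, Matrix.one_mulVec]
    rw [this, hL, hR]
    have := hsol i
    simp only [Pi.sub_apply]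
    linarith
  have hmy : ∀ i, m i ≤ y i := by
    have hsplit : (Rmat B m)⁻¹ *ᵥ a = m + (Rmat B m)⁻¹ *ᵥ tapp B m m := by
      have h1 : a = (a - tapp B m m) + tapp B m m := by funext j; simp
      conv_lhs => rw [h1]
      rw [Matrix.mulVec_add, ← hRm, Matrix.mulVec_mulVec,
        Matrix.nonsing_inv_mul _ hdet, Matrix.one_mulVec]
    intro i
    have h2 : y i = m i + ((Rmat B m)⁻¹ *ᵥ tapp B m m) i := by
      rw [hy, hsplit]; simp
    have hnn : 0 ≤ ((Rmat B m)⁻¹ *ᵥ tapp B m m) i := by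
      rw [happ]
      exact Finset.sum_nonneg fun j _ => mul_nonneg (hinv i j) (hBmm j)
    linarith
  have hy0 : ∀ i, 0 ≤ y i := fun i => le_trans (hm0 i) (hmy i)
  -- the truncated vector
  set w : Fin n → ℝ := fun j => if m j = 0 then y j else 0 with hw
  have hw0 : ∀ j, 0 ≤ w j := by
    intro j; simp only [hw]
    split
    · exact hy0 j
    · exact le_refl 0
  have hRwle : ∀ j, (Rmat B m *ᵥ w) j ≤ 0 := by
    intro j
    have hexp : ∀ v : Fin n → ℝ, (Rmat B m *ᵥ v) j
        = v j - (matL B m *ᵥ v) j - (matR B m *ᵥ v) j := by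
      intro v; simp [Rmat, Matrix.sub_mulVec, Matrix.one_mulVec]
    by_cases hj : m j = 0
    · -- here (R w) j = (R y) j = a j = 0
      have hsame : ∀ (M : Matrix (Fin n) (Fin n) ℝ),
          (∀ p, m p ≠ 0 → M j p = 0) → (M *ᵥ w) j = (M *ᵥ y) j := by
        intro M hM
        simp only [Matrix.mulVec, dotProduct]
        refine Finset.sum_congr rfl fun p _ => ?_
        by_cases hp : m p = 0
        · simp [hw, hp]
        · simp [hM p hp]
      have hLs := hsame (matL B m) (fun p hp => hLz j p hj hp)
      have hRs := hsame (matR B m) (fun p hp => hRz j p hj hp)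
      have hwj : w j = y j := by simp [hw, hj]
      have : (Rmat B m *ᵥ w) j = (Rmat B m *ᵥ y) j := by
        rw [hexp w, hexp y, hLs, hRs, hwj]
      rw [this, hRy]
      exact (ha0 j hj).le
    · have hwj : w j = 0 := by simp [hw, hj]
      rw [hexp w, hwj]
      have h1 : 0 ≤ (matL B m *ᵥ w) j := by
        rw [happ]; exact Finset.sum_nonneg fun p _ => mul_nonneg (hLnn j p) (hw0 p)
      have h2 : 0 ≤ (matR B m *ᵥ w) j := by
        rw [happ]; exact Finset.sum_nonneg fun p _ => mul_nonneg (hRnn j p) (hw0 p)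
      linarith
  have hwzero : ∀ j, w j = 0 := by
    intro j
    have hw' : w = (Rmat B m)⁻¹ *ᵥ (Rmat B m *ᵥ w) := by
      rw [Matrix.mulVec_mulVec, Matrix.nonsing_inv_mul _ hdet, Matrix.one_mulVec]
    have hle : w j ≤ 0 := by
      conv_lhs => rw [hw']
      rw [happ]
      exact Finset.sum_nonpos fun k _ =>
        mul_nonpos_of_nonneg_of_nonpos (hinv j k) (hRwle k)
    exact le_antisymm hle (hw0 j)
  intro i
  constructor
  · intro h
    have := hwzero i
    simpa [hw, h] using this
  · intro h
    exact le_antisymm (h ▸ hmy i) (hm0 i)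
end

section
/- Let a ∈ ℝⁿ with a ≥ 0 and let B be an entrywise nonnegative n×n×n tensor. Let m be the minimal nonnegative solution of x = a + Bx², assume R_m = I − Bm: − B:m is invertible with R_m⁻¹ entrywise nonnegative, and set y = R_m⁻¹a. Then y − m = R_m⁻¹(Bm²) ≥ 0; in particular m ≤ y entrywise. -/
open Matrix

/-- For the minimal solution `m` of `x = a + Bx²` and `y = R_m⁻¹ a`, one has
`y − m = R_m⁻¹ (Bm²) ≥ 0`; in particular `m ≤ y` entrywise. -/
theorem y_sub_m_eq_and_nonneg
    {n : ℕ} (a : Fin n → ℝ) (B : Fin n → Fin n → Fin n → ℝ)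
    (ha : ∀ i, 0 ≤ a i) (hB : ∀ i j k, 0 ≤ B i j k)
    (m : Fin n → ℝ)
    (hm0 : ∀ i, 0 ≤ m i)
    (hmsol : m = a + tapp B m m)
    (hmin : ∀ x : Fin n → ℝ, (∀ i, 0 ≤ x i) → x = a + tapp B x x → ∀ i, m i ≤ x i)
    (hdet : IsUnit (Rmat B m).det)
    (hinv : ∀ i j, 0 ≤ (Rmat B m)⁻¹ i j)
    (y : Fin n → ℝ) (hy : y = (Rmat B m)⁻¹ *ᵥ a) :
    y - m = (Rmat B m)⁻¹ *ᵥ tapp B m m ∧ ∀ i, m i ≤ y i := by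

  have hL : matL B m *ᵥ m = tapp B m m := by
    funext i
    simp only [matL, tapp, Matrix.mulVec, dotProduct, Matrix.of_apply,
      Finset.sum_mul]
    rw [Finset.sum_comm]
  have hR : matR B m *ᵥ m = tapp B m m := by
    funext i
    simp only [matR, tapp, Matrix.mulVec, dotProduct, Matrix.of_apply,
      Finset.sum_mul]
    apply Finset.sum_congr rfl; intro j _
    apply Finset.sum_congr rfl; intro k _
    ring
  have key : Rmat B m *ᵥ m = a - tapp B m m := by
    simp only [Rmat, Matrix.sub_mulVec, Matrix.one_mulVec, hL, hR]
    funext i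
    have := congrFun hmsol i
    simp only [Pi.add_apply, Pi.sub_apply] at this ⊢
    linarith
  have hRm : (Rmat B m)⁻¹ *ᵥ (Rmat B m *ᵥ m) = m := by
    rw [Matrix.mulVec_mulVec, Matrix.nonsing_inv_mul _ hdet, Matrix.one_mulVec]
  have heq : y - m = (Rmat B m)⁻¹ *ᵥ tapp B m m := by
    calc y - m = (Rmat B m)⁻¹ *ᵥ a - (Rmat B m)⁻¹ *ᵥ (a - tapp B m m) := by
          rw [hy, ← key, hRm]
      _ = (Rmat B m)⁻¹ *ᵥ tapp B m m := by rw [Matrix.mulVec_sub]; abel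
  refine ⟨heq, fun i => ?_⟩
  have h1 : 0 ≤ (y - m) i := by
    rw [heq]
    simp only [Matrix.mulVec, dotProduct, tapp]
    apply Finset.sum_nonneg
    intro j _
    apply mul_nonneg (hinv i j)
    apply Finset.sum_nonneg; intro k _
    apply Finset.sum_nonneg; intro l _
    exact mul_nonneg (mul_nonneg (hB j k l) (hm0 k)) (hm0 l)
  simpa using h1
end

section
/- Let a ∈ ℝⁿ with a ≥ 0 and let B be an entrywise nonnegative n×n×n tensor. Let m be the minimal nonnegative solution of x = a + Bx², assume R_m = I − Bm: − B:m is invertible with R_m⁻¹ entrywise nonnegative, and set y = R_m⁻¹a. If κ ∈ ℝ is such that y ≤ κ·m entrywise, then R_m⁻¹m ≤ (2κ−1)·m and R_m⁻¹(Bm²) ≤ (κ−1)·m entrywise. -/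
open Matrix

/-- If `y = R_m⁻¹ a ≤ κ·m` entrywise, then `R_m⁻¹ m ≤ (2κ−1)·m` and
`R_m⁻¹ (Bm²) ≤ (κ−1)·m` entrywise. -/
theorem Rinv_m_bounds_of_kappa
    {n : ℕ} (a : Fin n → ℝ) (B : Fin n → Fin n → Fin n → ℝ)
    (ha : ∀ i, 0 ≤ a i) (hB : ∀ i j k, 0 ≤ B i j k)
    (m : Fin n → ℝ)
    (hm0 : ∀ i, 0 ≤ m i)
    (hmsol : m = a + tapp B m m)
    (hmin : ∀ x : Fin n → ℝ, (∀ i, 0 ≤ x i) → x = a + tapp B x x → ∀ i, m i ≤ x i)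
    (hdet : IsUnit (Rmat B m).det)
    (hinv : ∀ i j, 0 ≤ (Rmat B m)⁻¹ i j)
    (y : Fin n → ℝ) (hy : y = (Rmat B m)⁻¹ *ᵥ a)
    (κ : ℝ) (hκ : ∀ i, y i ≤ κ * m i) :
    (∀ i, ((Rmat B m)⁻¹ *ᵥ m) i ≤ (2 * κ - 1) * m i) ∧
    (∀ i, ((Rmat B m)⁻¹ *ᵥ tapp B m m) i ≤ (κ - 1) * m i) := by
  have hRm : Rmat B m *ᵥ m = fun i => a i + a i - m i := by
    funext i
    have hm := congrFun hmsol i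
    simp only [Pi.add_apply, tapp] at hm
    have hswap : ∑ j, ∑ k, B i k j * m k * m j = ∑ j, ∑ k, B i j k * m j * m k := by
      rw [Finset.sum_comm]
    simp only [Rmat, matL, matR, Matrix.mulVec, dotProduct,
      Matrix.sub_apply, Matrix.one_apply, Matrix.of_apply, sub_mul,
      Finset.sum_sub_distrib, ite_mul, one_mul, zero_mul,
      Finset.sum_ite_eq, Finset.mem_univ, if_true, Finset.sum_mul]
    rw [hswap]
    have h2 : ∀ j, ∑ k, B i j k * m k * m j = ∑ k, B i j k * m j * m k := by
      intro j; apply Finset.sum_congr rfl; intro k _; ring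
    rw [Finset.sum_congr rfl (fun j _ => h2 j)]
    linarith [hm]
  have hcancel : (Rmat B m)⁻¹ *ᵥ (Rmat B m *ᵥ m) = m := by
    rw [Matrix.mulVec_mulVec, Matrix.nonsing_inv_mul _ hdet, Matrix.one_mulVec]
  have hlin : ∀ i, m i = y i + y i - ((Rmat B m)⁻¹ *ᵥ m) i := by
    intro i
    have := congrFun hcancel i
    rw [hRm] at this
    have hdecomp : (fun i => a i + a i - m i) = a + a - m := by funext i; simp
    rw [hdecomp, Matrix.mulVec_sub, Matrix.mulVec_add] at this
    simp only [Pi.sub_apply, Pi.add_apply] at this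
    rw [hy]
    linarith
  have hfst : ∀ i, ((Rmat B m)⁻¹ *ᵥ m) i ≤ (2 * κ - 1) * m i := by
    intro i
    have := hlin i
    have hk := hκ i
    nlinarith
  refine ⟨hfst, ?_⟩
  intro i
  have htm : tapp B m m = m - a := by
    funext j; have := congrFun hmsol j; simp only [Pi.add_apply, Pi.sub_apply] at *
    linarith
  rw [htm, Matrix.mulVec_sub]
  have := hlin i
  have hk := hκ i
  simp only [Pi.sub_apply, ← hy]
  nlinarith
end

section
/- Consider the multilinear PageRank equation x = (1−α)v + αPx² with α ∈ (0,1), v stochastic and P a stochastic n×n×n tensor, and let R_x = I − αP x: − αP:x. Then: (i) for every x ∈ ℝⁿ, 𝟏ᵀR_x = (1 − 2α(𝟏ᵀx))·𝟏ᵀ; (ii) if (x_k) is the Newton sequence defined by x_0 = 0 and x_{k+1} = x_k + R_{x_k}⁻¹((1−α)v + αPx_k² − x_k), where each R_{x_k} is invertible and z_k := 1 − 2α(𝟏ᵀx_k) ≠ 0, then z_0 = 1 and z_{k+1} = ((1−2α)² + z_k²)/(2z_k) for all k ≥ 0. -/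
open Matrix

/-- Triplet representation for the Newton iteration on multilinear PageRank
(Theorem `thmz` in the paper): `𝟏ᵀ R_x = (1 − 2α 𝟏ᵀx) 𝟏ᵀ`, and the scalars
`z_k = 1 − 2α(𝟏ᵀ x_k)` satisfy `z_0 = 1` and
`z_{k+1} = ((1−2α)² + z_k²)/(2 z_k)`. -/
theorem pagerank_newton_triplet
    {n : ℕ} (α : ℝ) (hα0 : 0 < α) (hα1 : α < 1)
    (v : Fin n → ℝ) (hv0 : ∀ i, 0 ≤ v i) (hv1 : ∑ i, v i = 1)
    (P : Fin n → Fin n → Fin n → ℝ)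
    (hP0 : ∀ i j k, 0 ≤ P i j k) (hP1 : ∀ j k, ∑ i, P i j k = 1)
    (B : Fin n → Fin n → Fin n → ℝ) (hBdef : B = fun i j k => α * P i j k) :
    (∀ x : Fin n → ℝ, ∀ j, (∑ i, Rmat B x i j) = 1 - 2 * α * (∑ i, x i)) ∧
    (∀ x : ℕ → (Fin n → ℝ), x 0 = 0 →
      (∀ k, IsUnit (Rmat B (x k)).det) →
      (∀ k, x (k + 1) =
        x k + (Rmat B (x k))⁻¹ *ᵥ ((fun i => (1 - α) * v i) + tapp B (x k) (x k) - x k)) →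
      ∀ z : ℕ → ℝ, (∀ k, z k = 1 - 2 * α * (∑ i, x k i)) → (∀ k, z k ≠ 0) →
        z 0 = 1 ∧ ∀ k, z (k + 1) = ((1 - 2 * α) ^ 2 + (z k) ^ 2) / (2 * z k)) := by

  subst hBdef
  set B : Fin n → Fin n → Fin n → ℝ := fun i j k => α * P i j k with hB
  have key : ∀ x : Fin n → ℝ, ∀ j, (∑ i, Rmat B x i j) = 1 - 2 * α * (∑ i, x i) := by
    intro x j
    simp only [Rmat, matL, matR, Matrix.sub_apply, Matrix.of_apply, Matrix.one_apply, hB]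
    rw [Finset.sum_sub_distrib, Finset.sum_sub_distrib]
    have h1 : ∑ i, (if i = j then (1:ℝ) else 0) = 1 := by simp
    have h2 : ∑ i, ∑ k, α * P i k j * x k = α * ∑ k, x k := by
      rw [Finset.sum_comm, Finset.mul_sum]
      refine Finset.sum_congr rfl fun k _ => ?_
      have : ∑ i, α * P i k j * x k = α * (∑ i, P i k j) * x k := by
        rw [Finset.mul_sum, Finset.sum_mul]
      rw [this, hP1, mul_one]
    have h3 : ∑ i, ∑ k, α * P i j k * x k = α * ∑ k, x k := by
      rw [Finset.sum_comm, Finset.mul_sum]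
      refine Finset.sum_congr rfl fun k _ => ?_
      have : ∑ i, α * P i j k * x k = α * (∑ i, P i j k) * x k := by
        rw [Finset.mul_sum, Finset.sum_mul]
      rw [this, hP1, mul_one]
    rw [h1, h2, h3]; ring
  refine ⟨key, ?_⟩
  intro x hx0 hinv hrec z hz hzne
  have hz0 : z 0 = 1 := by rw [hz 0, hx0]; simp
  refine ⟨hz0, fun k => ?_⟩
  set s : ℝ := ∑ i, x k i with hs
  have hzk : z k = 1 - 2 * α * s := hz k
  -- row-sum fact as vecMul
  have hvm : Matrix.vecMul (1 : Fin n → ℝ) (Rmat B (x k)) = (z k) • (1 : Fin n → ℝ) := by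
    funext j
    simp only [Matrix.vecMul, dotProduct, Pi.one_apply, one_mul, Pi.smul_apply,
      smul_eq_mul, mul_one]
    rw [key (x k) j, hzk]
  have hvminv : Matrix.vecMul (1 : Fin n → ℝ) (Rmat B (x k))⁻¹ = (z k)⁻¹ • (1 : Fin n → ℝ) := by
    have h := congrArg (fun w => Matrix.vecMul w (Rmat B (x k))⁻¹) hvm
    simp only [Matrix.vecMul_vecMul] at h
    rw [Matrix.mul_nonsing_inv _ (hinv k), Matrix.vecMul_one, Matrix.smul_vecMul] at h
    conv_rhs => rw [h]
    rw [smul_smul, inv_mul_cancel₀ (hzne k), one_smul]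
  -- sum of tapp
  have htapp : ∑ i, tapp B (x k) (x k) i = α * s ^ 2 := by
    simp only [tapp, hB]
    rw [Finset.sum_comm]
    have : ∀ j, ∑ i, ∑ k', α * P i j k' * x k j * x k k' = α * x k j * s := by
      intro j
      rw [Finset.sum_comm]
      have e1 : ∀ k', ∑ i, α * P i j k' * x k j * x k k'
          = α * x k j * x k k' := by
        intro k'
        have : ∑ i, α * P i j k' * x k j * x k k'
            = (∑ i, P i j k') * (α * x k j * x k k') := by
          rw [Finset.sum_mul]
          exact Finset.sum_congr rfl fun i _ => by ring
        rw [this, hP1, one_mul]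
      rw [Finset.sum_congr rfl fun k' _ => e1 k', ← Finset.mul_sum]
    rw [Finset.sum_congr rfl fun j _ => this j]
    rw [← Finset.sum_mul, ← Finset.mul_sum, ← hs]
    ring
  -- sum of f
  have hf : ∑ i, ((fun i => (1 - α) * v i) + tapp B (x k) (x k) - x k) i
      = (1 - α) + α * s ^ 2 - s := by
    simp only [Pi.add_apply, Pi.sub_apply]
    rw [Finset.sum_sub_distrib, Finset.sum_add_distrib, htapp, ← Finset.mul_sum, hv1, ← hs]
    ring
  -- sum of x (k+1)
  have hsum : ∑ i, x (k+1) i = s + (z k)⁻¹ * ((1 - α) + α * s ^ 2 - s) := by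
    rw [hrec k]
    simp only [Pi.add_apply]
    rw [Finset.sum_add_distrib, ← hs]
    congr 1
    have hdp : ∑ i, ((Rmat B (x k))⁻¹ *ᵥ
        ((fun i => (1 - α) * v i) + tapp B (x k) (x k) - x k)) i
        = dotProduct (1 : Fin n → ℝ) ((Rmat B (x k))⁻¹ *ᵥ
        ((fun i => (1 - α) * v i) + tapp B (x k) (x k) - x k)) := by
      simp [dotProduct]
    rw [hdp, Matrix.dotProduct_mulVec, hvminv]
    simp only [dotProduct, Pi.smul_apply, Pi.one_apply, smul_eq_mul, mul_one]
    rw [← Finset.mul_sum, hf]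
  rw [hz (k+1), hsum, hzk]
  have hne : (1 : ℝ) - 2 * α * s ≠ 0 := by rw [← hzk]; exact hzne k
  rw [hzk] at *
  field_simp
  ring
end

section
/- Consider the multilinear PageRank equation x = (1−α)v + αPx² with α ∈ (0,1), v stochastic and P a stochastic n×n×n tensor. Let y_k ∈ ℝⁿ, let R_{y_k} = I − αPy_k: − αP:y_k = M_k − N_k be any splitting with M_k invertible, and let y_{k+1} satisfy M_k y_{k+1} = N_k y_k + (1−α)v − αPy_k². If u_k := 1 − 2α(𝟏ᵀy_k) ≠ 0, then u_{k+1} := 1 − 2α(𝟏ᵀy_{k+1}) satisfies u_{k+1} = (u_k² + (1−2α)² + 4α·𝟏ᵀN_k(y_{k+1} − y_k)) / (2u_k). -/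
open Matrix

lemma colsum' {n : ℕ} (A : Matrix (Fin n) (Fin n) ℝ) (z : Fin n → ℝ) :
    ∑ i, (A *ᵥ z) i = ∑ j, (∑ i, A i j) * z j := by
  simp only [Matrix.mulVec, dotProduct]
  rw [Finset.sum_comm]
  simp only [Finset.sum_mul]

/-- Recurrence for the triplet scalars `u_k = 1 − 2α(𝟏ᵀ y_k)` of a splitting-based
(block Jacobi type) iteration for multilinear PageRank. -/
theorem splitting_triplet_recurrence
    {n : ℕ} (α : ℝ) (hα0 : 0 < α) (hα1 : α < 1)
    (v : Fin n → ℝ) (hv0 : ∀ i, 0 ≤ v i) (hv1 : ∑ i, v i = 1)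
    (P : Fin n → Fin n → Fin n → ℝ)
    (hP0 : ∀ i j k, 0 ≤ P i j k) (hP1 : ∀ j k, ∑ i, P i j k = 1)
    (B : Fin n → Fin n → Fin n → ℝ) (hBdef : B = fun i j k => α * P i j k)
    (y ynext : Fin n → ℝ) (M N : Matrix (Fin n) (Fin n) ℝ)
    (hsplit : Rmat B y = M - N)
    (hMdet : IsUnit M.det)
    (hupd : M *ᵥ ynext = N *ᵥ y + (fun i => (1 - α) * v i) - tapp B y y)
    (u unext : ℝ)
    (hu : u = 1 - 2 * α * (∑ i, y i)) (hune : u ≠ 0)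
    (hunext : unext = 1 - 2 * α * (∑ i, ynext i)) :
    unext = (u ^ 2 + (1 - 2 * α) ^ 2 + 4 * α * (∑ i, (N *ᵥ (ynext - y)) i)) / (2 * u) := by

  -- notation
  set s := ∑ i, y i with hs
  set t := ∑ i, ynext i with ht
  -- column sums of matL B y and matR B y are both α * s
  have hLcol : ∀ j, (∑ i, matL B y i j) = α * s := by
    intro j
    simp only [matL, Matrix.of_apply, hBdef]
    rw [Finset.sum_comm, Finset.mul_sum]
    refine Finset.sum_congr rfl fun k _ => ?_
    have : ∑ i, (α * P i k j) * y k = (∑ i, P i k j) * (α * y k) := by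
      rw [Finset.sum_mul]; exact Finset.sum_congr rfl fun i _ => by ring
    rw [this, hP1]; ring
  have hRcol : ∀ j, (∑ i, matR B y i j) = α * s := by
    intro j
    simp only [matR, Matrix.of_apply, hBdef]
    rw [Finset.sum_comm, Finset.mul_sum]
    refine Finset.sum_congr rfl fun k _ => ?_
    have : ∑ i, (α * P i j k) * y k = (∑ i, P i j k) * (α * y k) := by
      rw [Finset.sum_mul]; exact Finset.sum_congr rfl fun i _ => by ring
    rw [this, hP1]; ring
  -- sum of Rmat B y *ᵥ ynext
  have hRsum : ∑ i, ((Rmat B y) *ᵥ ynext) i = (1 - 2 * α * s) * t := by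
    rw [colsum']
    have hcol : ∀ j, (∑ i, Rmat B y i j) = 1 - 2 * α * s := by
      intro j
      simp only [Rmat, Matrix.sub_apply]
      rw [Finset.sum_sub_distrib, Finset.sum_sub_distrib, hLcol, hRcol]
      have hone : (∑ i, (1 : Matrix (Fin n) (Fin n) ℝ) i j) = 1 := by
        simp [Matrix.one_apply]
      rw [hone]; ring
    simp only [hcol]
    rw [← Finset.mul_sum]
  -- sum of tapp B y y
  have hTsum : ∑ i, tapp B y y i = α * s * s := by
    simp only [tapp, hBdef]
    rw [Finset.sum_comm]
    have h1 : ∀ j, ∑ i, ∑ k, (α * P i j k) * y j * y k = α * y j * s := by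
      intro j
      rw [Finset.sum_comm, Finset.mul_sum]
      refine Finset.sum_congr rfl fun k _ => ?_
      have : ∑ i, (α * P i j k) * y j * y k = (∑ i, P i j k) * (α * y j * y k) := by
        rw [Finset.sum_mul]; exact Finset.sum_congr rfl fun i _ => by ring
      rw [this, hP1]; ring
    simp only [h1]
    rw [← Finset.sum_mul, ← Finset.mul_sum]
  -- M = Rmat B y + N
  have hM : M = Rmat B y + N := by rw [hsplit]; abel
  -- sum the update equation
  have hsum := congrArg (fun w : Fin n → ℝ => ∑ i, w i) hupd
  simp only [hM, Matrix.add_mulVec, Pi.add_apply, Pi.sub_apply,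
    Finset.sum_add_distrib, Finset.sum_sub_distrib, hRsum, hTsum] at hsum
  have hvsum : ∑ i, (1 - α) * v i = (1 - α) := by
    rw [← Finset.mul_sum, hv1, mul_one]
  rw [hvsum] at hsum
  -- the N-difference term
  have hD : ∑ i, (N *ᵥ (ynext - y)) i = (∑ i, (N *ᵥ ynext) i) - ∑ i, (N *ᵥ y) i := by
    rw [Matrix.mulVec_sub]
    simp [Finset.sum_sub_distrib]
  rw [hD]
  -- algebra
  subst hu hunext
  field_simp
  linear_combination (-4 * α) * hsum
end

section
/- Let a ∈ ℝⁿ with a ≥ 0, let B be an entrywise nonnegative n×n×n tensor, define F(x) = a + Bx² − x and R_x = I − Bx: − B:x, and let x* ≥ 0 satisfy x* = a + B(x*)². Let x_k satisfy 0 ≤ x_k ≤ x* and F(x_k) ≥ 0 entrywise. Suppose R_{x_k} = M − N is a splitting with N ≥ 0 entrywise, M invertible with M⁻¹ ≥ 0 entrywise, and R_{x_k} invertible with R_{x_k}⁻¹ ≥ 0 entrywise. Define x_{k+1} by M x_{k+1} = N x_k + a − Bx_k². Then x_k ≤ x_{k+1} ≤ x* entrywise, and F(x_{k+1}) = Bh²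 + Nh ≥ 0 entrywise, where h = x_{k+1} − x_k. -/
open Matrix

private lemma matL_mulVec {n : ℕ} (B : Fin n → Fin n → Fin n → ℝ) (x h : Fin n → ℝ) :
    matL B x *ᵥ h = tapp B x h := by
  funext i
  simp only [matL, tapp, Matrix.mulVec, dotProduct, Matrix.of_apply, Finset.sum_mul]
  rw [Finset.sum_comm]

private lemma matR_mulVec {n : ℕ} (B : Fin n → Fin n → Fin n → ℝ) (x h : Fin n → ℝ) :
    matR B x *ᵥ h = tapp B h x := by
  funext i
  simp only [matR, tapp, Matrix.mulVec, dotProduct, Matrix.of_apply, Finset.sum_mul]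
  exact Finset.sum_congr rfl fun j _ => Finset.sum_congr rfl fun k _ => by ring

private lemma tapp_expand {n : ℕ} (B : Fin n → Fin n → Fin n → ℝ) (x y : Fin n → ℝ) :
    tapp B y y = tapp B x x + tapp B x (y - x) + tapp B (y - x) x + tapp B (y - x) (y - x) := by
  funext i
  simp only [tapp, Pi.add_apply, Pi.sub_apply, ← Finset.sum_add_distrib]
  exact Finset.sum_congr rfl fun j _ => Finset.sum_congr rfl fun k _ => by ring

private lemma tapp_nonneg {n : ℕ} {B : Fin n → Fin n → Fin n → ℝ} {x y : Fin n → ℝ}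
    (hB : ∀ i j k, 0 ≤ B i j k) (hx : ∀ i, 0 ≤ x i) (hy : ∀ i, 0 ≤ y i) (i : Fin n) :
    0 ≤ tapp B x y i :=
  Finset.sum_nonneg fun j _ => Finset.sum_nonneg fun k _ =>
    mul_nonneg (mul_nonneg (hB i j k) (hx j)) (hy k)

private lemma mulVec_nonneg' {n : ℕ} {A : Matrix (Fin n) (Fin n) ℝ} {v : Fin n → ℝ}
    (hA : ∀ i j, 0 ≤ A i j) (hv : ∀ i, 0 ≤ v i) (i : Fin n) : 0 ≤ (A *ᵥ v) i := by
  simp only [Matrix.mulVec, dotProduct]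
  exact Finset.sum_nonneg fun j _ => mul_nonneg (hA i j) (hv j)

/-- Monotone step of a splitting-based (block Jacobi type) iteration
(Theorem `thmj` in the paper): the iterate increases, stays below the solution
`x*`, and the new residual `F(x_{k+1}) = Bh² + Nh` is nonnegative. -/
theorem splitting_monotone_step
    {n : ℕ} (a : Fin n → ℝ) (B : Fin n → Fin n → Fin n → ℝ)
    (ha : ∀ i, 0 ≤ a i) (hB : ∀ i j k, 0 ≤ B i j k)
    (xstar : Fin n → ℝ) (hxstar0 : ∀ i, 0 ≤ xstar i)
    (hxstar : xstar = a + tapp B xstar xstar)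
    (xk : Fin n → ℝ) (hxk0 : ∀ i, 0 ≤ xk i) (hxkle : ∀ i, xk i ≤ xstar i)
    (hF : ∀ i, 0 ≤ (a + tapp B xk xk - xk) i)
    (M N : Matrix (Fin n) (Fin n) ℝ)
    (hsplit : Rmat B xk = M - N)
    (hN : ∀ i j, 0 ≤ N i j)
    (hMdet : IsUnit M.det) (hMinv : ∀ i j, 0 ≤ M⁻¹ i j)
    (hRdet : IsUnit (Rmat B xk).det) (hRinv : ∀ i j, 0 ≤ (Rmat B xk)⁻¹ i j)
    (xk1 : Fin n → ℝ)
    (hupd : M *ᵥ xk1 = N *ᵥ xk + a - tapp B xk xk) :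
    (∀ i, xk i ≤ xk1 i) ∧ (∀ i, xk1 i ≤ xstar i) ∧
    (a + tapp B xk1 xk1 - xk1 = tapp B (xk1 - xk) (xk1 - xk) + N *ᵥ (xk1 - xk)) ∧
    (∀ i, 0 ≤ (a + tapp B xk1 xk1 - xk1) i) := by
  set h := xk1 - xk with hh
  set d := xstar - xk with hd
  have hM : M = Rmat B xk + N := by rw [hsplit]; abel
  have hR : ∀ v, Rmat B xk *ᵥ v = v - tapp B xk v - tapp B v xk := by
    intro v
    simp [Rmat, Matrix.sub_mulVec, Matrix.one_mulVec, matL_mulVec, matR_mulVec]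
  have hMinvVec : ∀ v : Fin n → ℝ, (∀ i, 0 ≤ (M *ᵥ v) i) → ∀ i, 0 ≤ v i := by
    intro v hv i
    have hvv : v = M⁻¹ *ᵥ (M *ᵥ v) := by
      rw [Matrix.mulVec_mulVec, Matrix.nonsing_inv_mul M hMdet, Matrix.one_mulVec]
    rw [hvv]
    exact mulVec_nonneg' hMinv hv i
  have key : M *ᵥ h = a + tapp B xk xk - xk := by
    have e1 : M *ᵥ h = M *ᵥ xk1 - M *ᵥ xk := by rw [hh, Matrix.mulVec_sub]
    have e2 : M *ᵥ xk = Rmat B xk *ᵥ xk + N *ᵥ xk := by rw [hM, Matrix.add_mulVec]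
    rw [e1, hupd, e2, hR]
    abel
  have hFk : ∀ i, 0 ≤ (M *ᵥ h) i := by rw [key]; exact hF
  have hh0 : ∀ i, 0 ≤ h i := hMinvVec h hFk
  have c1 : ∀ i, xk i ≤ xk1 i := by
    intro i
    have := hh0 i
    rw [hh] at this
    simp only [Pi.sub_apply] at this
    linarith
  -- upper bound
  have hd0 : ∀ i, 0 ≤ d i := fun i => sub_nonneg.mpr (hxkle i)
  have expand := tapp_expand B xk xstar
  rw [← hd] at expand
  have eF : a + tapp B xk xk - xk = Rmat B xk *ᵥ d - tapp B d d := by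
    rw [hR d]
    linear_combination -hd - hxstar - expand
  have keyd : M *ᵥ (d - h) = tapp B d d + N *ᵥ d := by
    rw [Matrix.mulVec_sub, key, eF, hM, Matrix.add_mulVec]
    abel
  have hdh : ∀ i, 0 ≤ (d - h) i := by
    apply hMinvVec
    rw [keyd]
    intro i
    exact add_nonneg (tapp_nonneg hB hd0 hd0 i) (mulVec_nonneg' hN hd0 i)
  have c2 : ∀ i, xk1 i ≤ xstar i := by
    intro i
    have := hdh i
    rw [hd, hh] at this
    simp only [Pi.sub_apply] at this
    linarith
  -- residual identity
  have expand2 := tapp_expand B xk xk1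
  rw [← hh] at expand2
  have hMh2 : M *ᵥ h = Rmat B xk *ᵥ h + N *ᵥ h := by rw [hM, Matrix.add_mulVec]
  have hRh := hR h
  have resid : a + tapp B xk1 xk1 - xk1 = tapp B h h + N *ᵥ h := by
    linear_combination expand2 - key + hMh2 + hRh + hh
  refine ⟨c1, c2, resid, ?_⟩
  rw [resid]
  intro i
  exact add_nonneg (tapp_nonneg hB hh0 hh0 i) (mulVec_nonneg' hN hh0 i)
end
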